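/- arXiv:1710.03471 — 6 statements merged into one kernel-verified Lean document; each statement's English description precedes it below -/
import Mathlib

section
/- Let b : ℝⁿ → ℝⁿ be measurable and let φ̄ ∈ H¹([0,1]; ℝⁿ) satisfy ‖φ̄'‖_{L²(0,1)} > 0 and ‖b(φ̄)‖_{L²(0,1)} > 0, so that T̂(φ̄) ∈ (0, ∞). Then the function T ↦ S(T, φ̄) on (0, ∞) attains its infimum exactly at T = T̂(φ̄), and inf_{T > 0} S(T, φ̄) = S(T̂(φ̄), φ̄) = ‖φ̄'‖_{L²(0,1)} ‖b(φ̄)‖_{L²(0,1)} − ∫₀¹ ⟨φ̄'(s), b(φ̄(s))⟩ ds. -/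
open MeasureTheory Filter intervalIntegral
open scoped RealInnerProductSpace Topology

noncomputable section

/-- `φ` is an `H¹` path on `[0,T]` with (weak) derivative `dφ`:
`dφ` is square integrable on `(0,T)` and `φ` is the primitive of `dφ`. -/
def IsH1Path {n : ℕ} (T : ℝ) (φ dφ : ℝ → EuclideanSpace ℝ (Fin n)) : Prop :=
  MeasureTheory.MemLp dφ 2 (MeasureTheory.volume.restrict (Set.Ioc (0:ℝ) T)) ∧
  ∀ t ∈ Set.Icc (0:ℝ) T, φ t = φ 0 + ∫ s in (0:ℝ)..t, dφ s

/-- The Freidlin–Wentzell action functional `S_T(φ) = (1/2)∫₀ᵀ ‖φ' - b(φ)‖² dt`. -/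
def action {n : ℕ} (b : EuclideanSpace ℝ (Fin n) → EuclideanSpace ℝ (Fin n))
    (T : ℝ) (φ dφ : ℝ → EuclideanSpace ℝ (Fin n)) : ℝ :=
  (1/2) * ∫ t in (0:ℝ)..T, ‖dφ t - b (φ t)‖^2

/-- The `L²(0,T)` norm of an `ℝⁿ`-valued function. -/
def L2norm {n : ℕ} (T : ℝ) (f : ℝ → EuclideanSpace ℝ (Fin n)) : ℝ :=
  Real.sqrt (∫ t in (0:ℝ)..T, ‖f t‖^2)

/-- The admissible set `A_T` of `H¹` transition paths from `x₁` to `x₂` on `[0,T]`. -/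
def Adm {n : ℕ} (T : ℝ) (x₁ x₂ : EuclideanSpace ℝ (Fin n))
    (φ dφ : ℝ → EuclideanSpace ℝ (Fin n)) : Prop :=
  IsH1Path T φ dφ ∧ φ 0 = x₁ ∧ φ T = x₂

/-- The rescaled action `S(T, φ̄) = (T/2)∫₀¹ ‖T⁻¹ φ̄' - b(φ̄)‖² ds` on `[0,1]`. -/
def Ssc {n : ℕ} (b : EuclideanSpace ℝ (Fin n) → EuclideanSpace ℝ (Fin n))
    (T : ℝ) (φ dφ : ℝ → EuclideanSpace ℝ (Fin n)) : ℝ :=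
  (T/2) * ∫ s in (0:ℝ)..1, ‖T⁻¹ • dφ s - b (φ s)‖^2

/-- The optimal linear time scaling `T̂(φ̄) = ‖φ̄'‖_{L²} / ‖b(φ̄)‖_{L²}`. -/
def That {n : ℕ} (b : EuclideanSpace ℝ (Fin n) → EuclideanSpace ℝ (Fin n))
    (φ dφ : ℝ → EuclideanSpace ℝ (Fin n)) : ℝ :=
  L2norm 1 dφ / L2norm 1 (fun s => b (φ s))

/-- The reformulated action `Ŝ(φ̄) = ‖φ̄'‖_{L²} ‖b(φ̄)‖_{L²} − ∫₀¹⟨φ̄', b(φ̄)⟩ ds`. -/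
def Shat {n : ℕ} (b : EuclideanSpace ℝ (Fin n) → EuclideanSpace ℝ (Fin n))
    (φ dφ : ℝ → EuclideanSpace ℝ (Fin n)) : ℝ :=
  L2norm 1 dφ * L2norm 1 (fun s => b (φ s)) - ∫ s in (0:ℝ)..1, ⟪dφ s, b (φ s)⟫

/-- `a` and `c` are adjacent nodes of the partition (finite node set) `P`. -/
def Adjacent (P : Finset ℝ) (a c : ℝ) : Prop :=
  a ∈ P ∧ c ∈ P ∧ a < c ∧ ∀ p ∈ P, p ≤ a ∨ c ≤ p

/-- `φ` is affine on each element of the partition `P`. -/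
def PiecewiseAffineOn {n : ℕ} (P : Finset ℝ) (φ : ℝ → EuclideanSpace ℝ (Fin n)) : Prop :=
  ∀ a c, Adjacent P a c → ∀ t ∈ Set.Icc a c,
    φ t = φ a + ((t - a) / (c - a)) • (φ c - φ a)

/-- `P` is a partition (node set) of `[0,T]`. -/
def IsPartition (T : ℝ) (P : Finset ℝ) : Prop :=
  (0:ℝ) ∈ P ∧ T ∈ P ∧ ∀ p ∈ P, p ∈ Set.Icc (0:ℝ) T

/-- Weak convergence `φ_k ⇀ φ` in `H¹((0,T); ℝⁿ)`, expressed by testing the pair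
`(φ_k, φ_k')` against arbitrary pairs of `L²` functions. -/
def WeakH1Tendsto {n : ℕ} (T : ℝ) (φk dφk : ℕ → ℝ → EuclideanSpace ℝ (Fin n))
    (φ dφ : ℝ → EuclideanSpace ℝ (Fin n)) : Prop :=
  ∀ g₀ g₁ : ℝ → EuclideanSpace ℝ (Fin n),
    MeasureTheory.MemLp g₀ 2 (MeasureTheory.volume.restrict (Set.Ioc (0:ℝ) T)) →
    MeasureTheory.MemLp g₁ 2 (MeasureTheory.volume.restrict (Set.Ioc (0:ℝ) T)) →
    Tendsto (fun k => (∫ t in (0:ℝ)..T, ⟪φk k t, g₀ t⟫) + ∫ t in (0:ℝ)..T, ⟪dφk k t, g₁ t⟫)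
      atTop (𝓝 ((∫ t in (0:ℝ)..T, ⟪φ t, g₀ t⟫) + ∫ t in (0:ℝ)..T, ⟪dφ t, g₁ t⟫))

/-- Values of `S_T` over the admissible set `A_T` (Problem I). -/
def probISet {n : ℕ} (b : EuclideanSpace ℝ (Fin n) → EuclideanSpace ℝ (Fin n))
    (T : ℝ) (x₁ x₂ : EuclideanSpace ℝ (Fin n)) : Set ℝ :=
  {v | ∃ φ dφ, Adm T x₁ x₂ φ dφ ∧ v = action b T φ dφ}

/-- Values of `S_T` over all `T > 0` and `φ ∈ A_T` (Problem II); its infimum is the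
quasi-potential `V(x₁,x₂)`. -/
def probIISet {n : ℕ} (b : EuclideanSpace ℝ (Fin n) → EuclideanSpace ℝ (Fin n))
    (x₁ x₂ : EuclideanSpace ℝ (Fin n)) : Set ℝ :=
  {v | ∃ T, 0 < T ∧ ∃ φ dφ, Adm T x₁ x₂ φ dφ ∧ v = action b T φ dφ}

/-- Values of `Ŝ` over the rescaled admissible set `A₁`. -/
def shatSet {n : ℕ} (b : EuclideanSpace ℝ (Fin n) → EuclideanSpace ℝ (Fin n))
    (x₁ x₂ : EuclideanSpace ℝ (Fin n)) : Set ℝ :=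
  {v | ∃ φ dφ, Adm 1 x₁ x₂ φ dφ ∧ v = Shat b φ dφ}

/-- Membership in the finite element space `B_h` of continuous piecewise affine
admissible paths associated with the partition `P`. -/
def BmemP {n : ℕ} (P : Finset ℝ) (T : ℝ) (x₁ x₂ : EuclideanSpace ℝ (Fin n))
    (φ dφ : ℝ → EuclideanSpace ℝ (Fin n)) : Prop :=
  Adm T x₁ x₂ φ dφ ∧ PiecewiseAffineOn P φ

/-- Values of `S_T` over the finite element space `B_h` (the discretized Problem I). -/
def discSet {n : ℕ} (b : EuclideanSpace ℝ (Fin n) → EuclideanSpace ℝ (Fin n))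
    (P : Finset ℝ) (T : ℝ) (x₁ x₂ : EuclideanSpace ℝ (Fin n)) : Set ℝ :=
  {v | ∃ φ dφ, BmemP P T x₁ x₂ φ dφ ∧ v = action b T φ dφ}

/-- Values of `Ŝ` over the finite element space `B̄_h` (the discretized Problem II). -/
def discShatSet {n : ℕ} (b : EuclideanSpace ℝ (Fin n) → EuclideanSpace ℝ (Fin n))
    (P : Finset ℝ) (x₁ x₂ : EuclideanSpace ℝ (Fin n)) : Set ℝ :=
  {v | ∃ φ dφ, BmemP P 1 x₁ x₂ φ dφ ∧ v = Shat b φ dφ}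

lemma Ssc_expand {n : ℕ} (b : EuclideanSpace ℝ (Fin n) → EuclideanSpace ℝ (Fin n))
    (φ dφ : ℝ → EuclideanSpace ℝ (Fin n))
    (hφ : IsH1Path 1 φ dφ)
    (hbφ : MeasureTheory.MemLp (fun s => b (φ s)) 2
      (MeasureTheory.volume.restrict (Set.Ioc (0:ℝ) 1)))
    (T : ℝ) (hT : 0 < T) :
    Ssc b T φ dφ = (L2norm 1 dφ)^2 / (2*T) + T * (L2norm 1 (fun s => b (φ s)))^2 / 2
      - ∫ s in (0:ℝ)..1, ⟪dφ s, b (φ s)⟫ := by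
  have hdφ := hφ.1
  -- integrability facts
  have hI1 : MeasureTheory.Integrable (fun s => ‖dφ s‖^2)
      (MeasureTheory.volume.restrict (Set.Ioc (0:ℝ) 1)) := by
    have := hdφ.integrable_norm_rpow two_ne_zero ENNReal.ofNat_ne_top
    simpa [ENNReal.toReal_ofNat, Real.rpow_natCast,
      Real.rpow_two] using this
  have hI2 : MeasureTheory.Integrable (fun s => ‖b (φ s)‖^2)
      (MeasureTheory.volume.restrict (Set.Ioc (0:ℝ) 1)) := by
    have := hbφ.integrable_norm_rpow two_ne_zero ENNReal.ofNat_ne_top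
    simpa [ENNReal.toReal_ofNat, Real.rpow_natCast, Real.rpow_two] using this
  have hI3 : MeasureTheory.Integrable (fun s => ⟪dφ s, b (φ s)⟫)
      (MeasureTheory.volume.restrict (Set.Ioc (0:ℝ) 1)) := by
    refine MeasureTheory.Integrable.mono'
      ((hI1.add hI2).div_const 2) ?_ ?_
    · exact (hdφ.1.inner hbφ.1)
    · filter_upwards with s
      have h1 := abs_real_inner_le_norm (dφ s) (b (φ s))
      have h2 : ‖dφ s‖ * ‖b (φ s)‖ ≤ (‖dφ s‖^2 + ‖b (φ s)‖^2)/2 := by nlinarith [sq_nonneg (‖dφ s‖ - ‖b (φ s)‖)]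
      calc ‖⟪dφ s, b (φ s)⟫‖ = |⟪dφ s, b (φ s)⟫| := rfl
        _ ≤ ‖dφ s‖ * ‖b (φ s)‖ := h1
        _ ≤ (‖dφ s‖^2 + ‖b (φ s)‖^2)/2 := h2
  have hT' : T ≠ 0 := ne_of_gt hT
  -- pointwise expansion
  have hpt : ∀ s : ℝ, ‖T⁻¹ • dφ s - b (φ s)‖^2
      = T⁻¹^2 * ‖dφ s‖^2 - 2 * T⁻¹ * ⟪dφ s, b (φ s)⟫ + ‖b (φ s)‖^2 := by
    intro s
    rw [norm_sub_sq_real, norm_smul, real_inner_smul_left]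
    rw [mul_pow]
    simp [Real.norm_eq_abs, sq_abs]
    ring
  -- norms squared as integrals
  have hA2 : (L2norm 1 dφ)^2 = ∫ s in (0:ℝ)..1, ‖dφ s‖^2 := by
    rw [L2norm, Real.sq_sqrt]
    exact intervalIntegral.integral_nonneg zero_le_one (fun s _ => sq_nonneg _)
  have hB2 : (L2norm 1 (fun s => b (φ s)))^2 = ∫ s in (0:ℝ)..1, ‖b (φ s)‖^2 := by
    rw [L2norm, Real.sq_sqrt]
    exact intervalIntegral.integral_nonneg zero_le_one (fun s _ => sq_nonneg _)
  rw [Ssc, hA2, hB2]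
  rw [intervalIntegral.integral_of_le zero_le_one, intervalIntegral.integral_of_le zero_le_one,
    intervalIntegral.integral_of_le zero_le_one, intervalIntegral.integral_of_le zero_le_one]
  have : ∫ s in Set.Ioc (0:ℝ) 1, ‖T⁻¹ • dφ s - b (φ s)‖^2
      = T⁻¹^2 * (∫ s in Set.Ioc (0:ℝ) 1, ‖dφ s‖^2)
        - 2 * T⁻¹ * (∫ s in Set.Ioc (0:ℝ) 1, ⟪dφ s, b (φ s)⟫)
        + ∫ s in Set.Ioc (0:ℝ) 1, ‖b (φ s)‖^2 := by
    have hsub : MeasureTheory.Integrable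
        (fun s => T⁻¹^2 * ‖dφ s‖^2 - 2*T⁻¹ * ⟪dφ s, b (φ s)⟫)
        (MeasureTheory.volume.restrict (Set.Ioc (0:ℝ) 1)) :=
      (hI1.const_mul (T⁻¹^2)).sub (hI3.const_mul (2*T⁻¹))
    rw [MeasureTheory.integral_congr_ae (Filter.Eventually.of_forall hpt),
      MeasureTheory.integral_add hsub hI2,
      MeasureTheory.integral_sub (hI1.const_mul _) (hI3.const_mul _),
      MeasureTheory.integral_const_mul, MeasureTheory.integral_const_mul]
  rw [this]
  field_simp
  ring

/-- for a path `φ̄` with `‖φ̄'‖_{L²} > 0` and `‖b(φ̄)‖_{L²} > 0`, the map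
`T ↦ S(T,φ̄)` on `(0,∞)` attains its infimum exactly at `T̂(φ̄)`, and
`inf_{T>0} S(T,φ̄) = S(T̂(φ̄),φ̄) = ‖φ̄'‖‖b(φ̄)‖ − ∫₀¹⟨φ̄', b(φ̄)⟩`. -/
theorem stmt1 {n : ℕ} (b : EuclideanSpace ℝ (Fin n) → EuclideanSpace ℝ (Fin n))
    (φ dφ : ℝ → EuclideanSpace ℝ (Fin n))
    (hφ : IsH1Path 1 φ dφ)
    (hbφ : MeasureTheory.MemLp (fun s => b (φ s)) 2
      (MeasureTheory.volume.restrict (Set.Ioc (0:ℝ) 1)))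
    (hA : 0 < L2norm 1 dφ)
    (hB : 0 < L2norm 1 (fun s => b (φ s))) :
    (0 < That b φ dφ) ∧
    (∀ T : ℝ, 0 < T → Ssc b (That b φ dφ) φ dφ ≤ Ssc b T φ dφ) ∧
    (∀ T : ℝ, 0 < T → T ≠ That b φ dφ → Ssc b (That b φ dφ) φ dφ < Ssc b T φ dφ) ∧
    IsGLB {v : ℝ | ∃ T, 0 < T ∧ v = Ssc b T φ dφ} (Ssc b (That b φ dφ) φ dφ) ∧
    Ssc b (That b φ dφ) φ dφ = Shat b φ dφ := by
  
  set A := L2norm 1 dφ with hA'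
  set B := L2norm 1 (fun s => b (φ s)) with hB'
  set C := ∫ s in (0:ℝ)..1, ⟪dφ s, b (φ s)⟫ with hC'
  have hT0 : That b φ dφ = A / B := rfl
  have hTpos : 0 < That b φ dφ := by rw [hT0]; positivity
  have hEx : ∀ T : ℝ, 0 < T → Ssc b T φ dφ = A^2/(2*T) + T*B^2/2 - C :=
    fun T hT => Ssc_expand b φ dφ hφ hbφ T hT
  have hval : Ssc b (That b φ dφ) φ dφ = A*B - C := by
    rw [hEx _ hTpos, hT0]
    field_simp
    ring
  have hkey : ∀ T : ℝ, 0 < T → Ssc b T φ dφ - (A*B - C) = (A - T*B)^2/(2*T) := by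
    intro T hT
    rw [hEx T hT]
    field_simp
    ring
  have hle : ∀ T : ℝ, 0 < T → Ssc b (That b φ dφ) φ dφ ≤ Ssc b T φ dφ := by
    intro T hT
    rw [hval]
    have := hkey T hT
    nlinarith [sq_nonneg (A - T*B), div_nonneg (sq_nonneg (A - T*B)) (le_of_lt (by linarith : (0:ℝ) < 2*T))]
  have hlt : ∀ T : ℝ, 0 < T → T ≠ That b φ dφ → Ssc b (That b φ dφ) φ dφ < Ssc b T φ dφ := by
    intro T hT hne
    rw [hval]
    have h1 := hkey T hT
    have h2 : A - T*B ≠ 0 := by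
      intro h
      apply hne
      rw [hT0]
      field_simp
      linarith
    have h3 : 0 < (A - T*B)^2/(2*T) := by positivity
    linarith
  refine ⟨hTpos, hle, hlt, ⟨?_, ?_⟩, by rw [hval]; rfl⟩
  · rintro v ⟨T, hT, rfl⟩
    exact hle T hT
  · intro w hw
    exact hw ⟨That b φ dφ, hTpos, rfl⟩
end
end

section
/- Let b : ℝⁿ → ℝⁿ be globally Lipschitz and fix x₁, x₂ ∈ ℝⁿ with x₁ ≠ x₂. (i) If (T*, φ*) with 0 < T* < ∞ and φ* ∈ A_{T*} attains the double infimum inf_{T>0} inf_{φ∈A_T} S_T(φ), then the rescaled path φ̄*(s) = φ*(sT*) satisfies S_{T*}(φ*) = Ŝ(φ̄*) = inf_{φ̄∈A₁} Ŝ(φ̄) and T* = T̂(φ̄*). (ii) Conversely, if φ̄* minimizes Ŝ over A₁ and T* := T̂(φ̄*) < ∞, then φ*(t) := φ̄*(t/T*) satisfies S_{T*}(φ*) = inf_{T>0} inf_{φ∈A_T} S_T(φ), i.e. (T*, φ*) is a minimizer of Problem II. -/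
open MeasureTheory Filter intervalIntegral
open scoped RealInnerProductSpace Topology

noncomputable section

section Aux

lemma memLp_scale {n : ℕ} {f : ℝ → EuclideanSpace ℝ (Fin n)} {S c : ℝ} (hc : 0 < c)
    (hf : MemLp f 2 (volume.restrict (Set.Ioc 0 S))) :
    MemLp (fun x => f (x * c)) 2 (volume.restrict (Set.Ioc 0 (S / c))) := by
  have hmeas : Measurable fun x : ℝ => x * c := measurable_id.mul_const c
  have hpre : (fun x : ℝ => x * c) ⁻¹' (Set.Ioc 0 S) = Set.Ioc 0 (S / c) := by
    ext x
    simp only [Set.mem_preimage, Set.mem_Ioc, le_div_iff₀ hc]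
    constructor
    · rintro ⟨h1, h2⟩; exact ⟨by nlinarith, h2⟩
    · rintro ⟨h1, h2⟩; exact ⟨by nlinarith, h2⟩
  have hmap : Measure.map (fun x : ℝ => x * c) (volume.restrict (Set.Ioc 0 (S / c)))
      = (ENNReal.ofReal c⁻¹) • volume.restrict (Set.Ioc 0 S) := by
    rw [← hpre, ← Measure.restrict_map hmeas measurableSet_Ioc,
      Real.map_volume_mul_right hc.ne', abs_of_pos (inv_pos.2 hc), Measure.restrict_smul]
  have hf2 : MemLp f 2 ((ENNReal.ofReal c⁻¹) • volume.restrict (Set.Ioc 0 S)) :=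
    hf.smul_measure ENNReal.ofReal_ne_top
  rw [← hmap] at hf2
  have hsn := eLpNorm_map_measure (p := 2) (μ := volume.restrict (Set.Ioc 0 (S/c)))
      (f := fun x : ℝ => x * c) hf2.1 hmeas.aemeasurable
  refine ⟨hf2.1.comp_measurable hmeas, ?_⟩
  have h3 : ((fun y => f y) ∘ fun x : ℝ => x * c) = fun x => f (x * c) := rfl
  rw [← h3]
  exact hsn ▸ hf2.2

variable {n : ℕ} {b : EuclideanSpace ℝ (Fin n) → EuclideanSpace ℝ (Fin n)}
  {x₁ x₂ : EuclideanSpace ℝ (Fin n)} {φ dφ db : ℝ → EuclideanSpace ℝ (Fin n)} {K : NNReal}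

lemma h1_package (hb : LipschitzWith K b) (h : IsH1Path 1 φ db) :
    IntegrableOn (fun s => ‖db s‖^2) (Set.Ioc (0:ℝ) 1) volume ∧
    IntegrableOn (fun s => ‖b (φ s)‖^2) (Set.Ioc (0:ℝ) 1) volume ∧
    IntegrableOn (fun s => ⟪db s, b (φ s)⟫) (Set.Ioc (0:ℝ) 1) volume := by
  have hsm : AEStronglyMeasurable db (volume.restrict (Set.Ioc (0:ℝ) 1)) :=
    h.1.aestronglyMeasurable
  have hA : IntegrableOn (fun s => ‖db s‖^2) (Set.Ioc (0:ℝ) 1) volume :=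
    (memLp_two_iff_integrable_sq_norm hsm).1 h.1
  haveI : IsFiniteMeasure (volume.restrict (Set.Ioc (0:ℝ) 1)) :=
    ⟨by simp [Real.volume_Ioc]⟩
  have hdbInt : IntegrableOn db (Set.Icc (0:ℝ) 1) volume := by
    rw [integrableOn_Icc_iff_integrableOn_Ioc]
    exact h.1.integrable (by norm_num)
  set ψ : ℝ → EuclideanSpace ℝ (Fin n) := fun t => φ 0 + ∫ s in (0:ℝ)..t, db s with hψdef
  have hψ : ContinuousOn ψ (Set.Icc (0:ℝ) 1) := by
    apply continuousOn_const.add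
    have := continuousOn_primitive_interval (a := (0:ℝ)) (b := (1:ℝ)) (f := db) (μ := volume)
      (by rwa [Set.uIcc_of_le zero_le_one])
    rwa [Set.uIcc_of_le zero_le_one] at this
  have hφψ : ∀ t ∈ Set.Icc (0:ℝ) 1, φ t = ψ t := h.2
  have hbψ : ContinuousOn (fun t => b (ψ t)) (Set.Icc (0:ℝ) 1) :=
    hb.continuous.comp_continuousOn hψ
  have hBψ : IntegrableOn (fun s => ‖b (ψ s)‖^2) (Set.Icc (0:ℝ) 1) volume :=
    ((hbψ.norm).pow 2).integrableOn_Icc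
  have heq : Set.EqOn (fun s => ‖b (φ s)‖^2) (fun s => ‖b (ψ s)‖^2) (Set.Ioc (0:ℝ) 1) := by
    intro s hs
    simp only [hφψ s (Set.Ioc_subset_Icc_self hs)]
  have hB : IntegrableOn (fun s => ‖b (φ s)‖^2) (Set.Ioc (0:ℝ) 1) volume :=
    (IntegrableOn.congr_fun (hBψ.mono_set Set.Ioc_subset_Icc_self) heq.symm measurableSet_Ioc)
  have hbφae : (fun s => b (φ s)) =ᵐ[volume.restrict (Set.Ioc (0:ℝ) 1)] (fun s => b (ψ s)) := by
    refine (ae_restrict_iff' measurableSet_Ioc).2 (ae_of_all _ fun s hs => ?_)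
    simp only [hφψ s (Set.Ioc_subset_Icc_self hs)]
  have hbφm : AEStronglyMeasurable (fun s => b (φ s)) (volume.restrict (Set.Ioc (0:ℝ) 1)) :=
    ((hbψ.mono Set.Ioc_subset_Icc_self).aestronglyMeasurable measurableSet_Ioc).congr hbφae.symm
  refine ⟨hA, hB, ?_⟩
  have hCm : AEStronglyMeasurable (fun s => ⟪db s, b (φ s)⟫)
      (volume.restrict (Set.Ioc (0:ℝ) 1)) := hsm.inner hbφm
  refine Integrable.mono' (hA.add hB) hCm (ae_of_all _ fun s => ?_)
  have h1 : ‖⟪db s, b (φ s)⟫‖ ≤ ‖db s‖ * ‖b (φ s)‖ := abs_real_inner_le_norm _ _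
  have h2 : ‖db s‖ * ‖b (φ s)‖ ≤ ‖db s‖^2 + ‖b (φ s)‖^2 := by
    nlinarith [sq_nonneg (‖db s‖ - ‖b (φ s)‖), norm_nonneg (db s), norm_nonneg (b (φ s))]
  exact h1.trans h2

lemma L2norm_sq_eq (f : ℝ → EuclideanSpace ℝ (Fin n)) :
    (L2norm 1 f)^2 = ∫ t in (0:ℝ)..1, ‖f t‖^2 :=
  Real.sq_sqrt (intervalIntegral.integral_nonneg zero_le_one fun _ _ => sq_nonneg _)

lemma Ssc_eq
    (hA : IntegrableOn (fun s => ‖db s‖^2) (Set.Ioc (0:ℝ) 1) volume)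
    (hB : IntegrableOn (fun s => ‖b (φ s)‖^2) (Set.Ioc (0:ℝ) 1) volume)
    (hC : IntegrableOn (fun s => ⟪db s, b (φ s)⟫) (Set.Ioc (0:ℝ) 1) volume)
    {T : ℝ} (hT : 0 < T) :
    Ssc b T φ db
      = (L2norm 1 db - T * L2norm 1 (fun s => b (φ s)))^2 / (2*T) + Shat b φ db := by
  have iiA : IntervalIntegrable (fun s => ‖db s‖^2) volume 0 1 :=
    (intervalIntegrable_iff_integrableOn_Ioc_of_le zero_le_one).2 hA
  have iiB : IntervalIntegrable (fun s => ‖b (φ s)‖^2) volume 0 1 :=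
    (intervalIntegrable_iff_integrableOn_Ioc_of_le zero_le_one).2 hB
  have iiC : IntervalIntegrable (fun s => ⟪db s, b (φ s)⟫) volume 0 1 :=
    (intervalIntegrable_iff_integrableOn_Ioc_of_le zero_le_one).2 hC
  have hexp : (∫ s in (0:ℝ)..1, ‖T⁻¹ • db s - b (φ s)‖^2)
      = T⁻¹^2 * (∫ s in (0:ℝ)..1, ‖db s‖^2)
        - 2 * T⁻¹ * (∫ s in (0:ℝ)..1, ⟪db s, b (φ s)⟫)
        + ∫ s in (0:ℝ)..1, ‖b (φ s)‖^2 := by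
    have hpt : ∀ s : ℝ, ‖T⁻¹ • db s - b (φ s)‖^2
        = T⁻¹^2 * ‖db s‖^2 - 2 * T⁻¹ * ⟪db s, b (φ s)⟫ + ‖b (φ s)‖^2 := by
      intro s
      have := norm_sub_sq_real (T⁻¹ • db s) (b (φ s))
      rw [this, norm_smul, real_inner_smul_left]
      simp [Real.norm_eq_abs, mul_pow, sq_abs]
      ring
    rw [intervalIntegral.integral_congr (fun s _ => hpt s)]
    rw [intervalIntegral.integral_add ((iiA.const_mul _).sub (iiC.const_mul _)) iiB,
      intervalIntegral.integral_sub (iiA.const_mul _) (iiC.const_mul _),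
      intervalIntegral.integral_const_mul, intervalIntegral.integral_const_mul]
  have ha2 := L2norm_sq_eq db
  have hb2 := L2norm_sq_eq (fun s => b (φ s))
  rw [Ssc, hexp, Shat, ← ha2, ← hb2]
  field_simp
  ring

lemma rescale_down {T : ℝ} (hT : 0 < T) (h : Adm T x₁ x₂ φ dφ) :
    Adm 1 x₁ x₂ (fun s => φ (s * T)) (fun s => T • dφ (s * T)) ∧
    action b T φ dφ = Ssc b T (fun s => φ (s * T)) (fun s => T • dφ (s * T)) := by
  obtain ⟨⟨hmem, hprim⟩, h0, hT'⟩ := h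
  constructor
  · refine ⟨⟨?_, ?_⟩, by simpa using h0, by simpa using hT'⟩
    · have := (memLp_scale hT hmem).const_smul (T : ℝ)
      rwa [div_self hT.ne'] at this
    · intro s hs
      have hsT : s * T ∈ Set.Icc (0:ℝ) T :=
        ⟨mul_nonneg hs.1 hT.le, by nlinarith [hs.2]⟩
      have h1 := hprim (s * T) hsT
      have h2 : (∫ u in (0:ℝ)..s, T • dφ (u * T)) = ∫ u in (0:ℝ)..(s * T), dφ u := by
        rw [intervalIntegral.integral_smul]
        have := intervalIntegral.smul_integral_comp_mul_right (a := (0:ℝ)) (b := s) dφ T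
        simpa using this
      simp only [zero_mul]
      rw [h2, ← h1]
  · have h2 : (T • ∫ s in (0:ℝ)..1, ‖dφ (s * T) - b (φ (s * T))‖^2)
        = ∫ t in (0:ℝ)..T, ‖dφ t - b (φ t)‖^2 := by
      have := intervalIntegral.smul_integral_comp_mul_right (a := (0:ℝ)) (b := 1)
        (fun t => ‖dφ t - b (φ t)‖^2) T
      simpa using this
    rw [action, Ssc, ← h2]
    have h3 : (∫ s in (0:ℝ)..1, ‖T⁻¹ • (T • dφ (s * T)) - b (φ (s * T))‖^2)
        = ∫ s in (0:ℝ)..1, ‖dφ (s * T) - b (φ (s * T))‖^2 := by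
      apply intervalIntegral.integral_congr
      intro s _
      show ‖T⁻¹ • T • dφ (s * T) - b (φ (s * T))‖ ^ 2 = _
      rw [smul_smul, inv_mul_cancel₀ hT.ne', one_smul]
    rw [h3, smul_eq_mul]
    ring

lemma rescale_up {T : ℝ} (hT : 0 < T) (h : Adm 1 x₁ x₂ φ db) :
    Adm T x₁ x₂ (fun t => φ (t / T)) (fun t => T⁻¹ • db (t / T)) ∧
    action b T (fun t => φ (t / T)) (fun t => T⁻¹ • db (t / T)) = Ssc b T φ db := by
  obtain ⟨⟨hmem, hprim⟩, h0, h1'⟩ := h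
  have hTi : (0:ℝ) < T⁻¹ := inv_pos.2 hT
  constructor
  · refine ⟨⟨?_, ?_⟩, by simpa using h0, by simpa [div_self hT.ne'] using h1'⟩
    · have := (memLp_scale hTi hmem).const_smul (T⁻¹ : ℝ)
      have he : (1:ℝ) / T⁻¹ = T := by field_simp
      rw [he] at this
      simp only [div_eq_mul_inv]
      exact this
    · intro t ht
      have htT : t / T ∈ Set.Icc (0:ℝ) 1 :=
        ⟨div_nonneg ht.1 hT.le, div_le_one_of_le₀ ht.2 hT.le⟩
      have hp := hprim (t / T) htT
      have h2 : (∫ u in (0:ℝ)..t, T⁻¹ • db (u / T)) = ∫ u in (0:ℝ)..(t / T), db u := by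
        rw [intervalIntegral.integral_smul]
        have := intervalIntegral.smul_integral_comp_mul_right (a := (0:ℝ)) (b := t) db T⁻¹
        simpa [div_eq_mul_inv] using this
      simp only [zero_div]
      rw [h2, ← hp]
  · have h2 : (T⁻¹ • ∫ t in (0:ℝ)..T, ‖T⁻¹ • db (t / T) - b (φ (t / T))‖^2)
        = ∫ s in (0:ℝ)..1, ‖T⁻¹ • db s - b (φ s)‖^2 := by
      have := intervalIntegral.smul_integral_comp_mul_right (a := (0:ℝ)) (b := T)
        (fun s => ‖T⁻¹ • db s - b (φ s)‖^2) T⁻¹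
      simpa [div_eq_mul_inv, mul_inv_cancel₀ hT.ne'] using this
    rw [action, Ssc, ← h2, smul_eq_mul]
    field_simp

lemma line_adm : Adm 1 x₁ x₂ (fun t : ℝ => x₁ + t • (x₂ - x₁)) (fun _ => x₂ - x₁) := by
  haveI : IsFiniteMeasure (volume.restrict (Set.Ioc (0:ℝ) 1)) :=
    ⟨by simp [Real.volume_Ioc]⟩
  refine ⟨⟨memLp_const _, ?_⟩, by simp, by simp⟩
  intro t _
  simp [intervalIntegral.integral_const, smul_sub]

lemma action_nonneg {T : ℝ} (hT : 0 ≤ T) : 0 ≤ action b T φ dφ :=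
  mul_nonneg (by norm_num)
    (intervalIntegral.integral_nonneg hT fun _ _ => sq_nonneg _)

lemma ssc_nonneg {T : ℝ} (hT : 0 ≤ T) : 0 ≤ Ssc b T φ db :=
  mul_nonneg (by positivity)
    (intervalIntegral.integral_nonneg zero_le_one fun _ _ => sq_nonneg _)

lemma a_pos (h : Adm 1 x₁ x₂ φ db) (hx : x₁ ≠ x₂) : 0 < L2norm 1 db := by
  have hsm : AEStronglyMeasurable db (volume.restrict (Set.Ioc (0:ℝ) 1)) :=
    h.1.1.aestronglyMeasurable
  have hA : IntegrableOn (fun s => ‖db s‖^2) (Set.Ioc (0:ℝ) 1) volume :=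
    (memLp_two_iff_integrable_sq_norm hsm).1 h.1.1
  have h0 : (0:ℝ) ≤ ∫ t in (0:ℝ)..1, ‖db t‖^2 :=
    intervalIntegral.integral_nonneg zero_le_one fun _ _ => sq_nonneg _
  rw [L2norm, Real.sqrt_pos]
  rcases h0.lt_or_eq with h0' | h0'
  · exact h0'
  exfalso
  have hI : (∫ t in Set.Ioc (0:ℝ) 1, ‖db t‖^2) = 0 := by
    rw [← intervalIntegral.integral_of_le zero_le_one, ← h0']
  have hz : (fun t => ‖db t‖^2) =ᵐ[volume.restrict (Set.Ioc (0:ℝ) 1)] 0 :=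
    (integral_eq_zero_iff_of_nonneg (fun t => sq_nonneg _) hA).1 hI
  have hdbz : db =ᵐ[volume.restrict (Set.Ioc (0:ℝ) 1)] 0 := by
    filter_upwards [hz] with t ht
    have : ‖db t‖^2 = 0 := ht
    simpa [pow_eq_zero_iff, norm_eq_zero] using this
  have hint : (∫ s in (0:ℝ)..1, db s) = 0 := by
    rw [intervalIntegral.integral_of_le zero_le_one]
    rw [integral_congr_ae hdbz]
    simp
  have h1 := h.1.2 1 (by norm_num : (1:ℝ) ∈ Set.Icc (0:ℝ) 1)
  rw [hint, add_zero, h.2.1] at h1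
  exact hx (h1 ▸ h.2.2)

lemma shat_nonneg (hb : LipschitzWith K b) (hx : x₁ ≠ x₂) {φ db : ℝ → EuclideanSpace ℝ (Fin n)} (h : Adm 1 x₁ x₂ φ db) :
    0 ≤ Shat b φ db := by
  obtain ⟨hA, hB, hC⟩ := h1_package hb h.1
  have ha := a_pos h hx
  have hβ0 : (0:ℝ) ≤ L2norm 1 (fun s => b (φ s)) := Real.sqrt_nonneg _
  by_contra hneg
  push_neg at hneg
  rcases hβ0.lt_or_eq with hβ | hβ
  · have hT : 0 < L2norm 1 db / L2norm 1 (fun s => b (φ s)) := div_pos ha hβ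
    have he := Ssc_eq hA hB hC hT
    have hz : L2norm 1 db - (L2norm 1 db / L2norm 1 (fun s => b (φ s)))
        * L2norm 1 (fun s => b (φ s)) = 0 := by
      field_simp
      ring
    rw [hz] at he
    have := ssc_nonneg (b := b) (φ := φ) (db := db) hT.le
    rw [he] at this
    simp at this
    linarith
  · -- L2norm of b∘φ = 0
    set S := Shat b φ db with hS
    set T : ℝ := (L2norm 1 db)^2 / (-S) with hTdef
    have hTpos : 0 < T := by
      apply div_pos (by positivity) (by linarith)
    have he := Ssc_eq hA hB hC hTpos
    rw [← hβ, mul_zero, sub_zero] at he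
    have he2 : (L2norm 1 db)^2 / (2*T) = -S/2 := by
      rw [hTdef]
      have hane : L2norm 1 db ≠ 0 := ha.ne'
      have hSne : -S ≠ 0 := by linarith
      field_simp
    rw [he2] at he
    have := ssc_nonneg (b := b) (φ := φ) (db := db) hTpos.le
    rw [he] at this
    linarith

lemma bdd_probII : BddBelow (probIISet b x₁ x₂) := by
  refine ⟨0, ?_⟩
  rintro v ⟨T, hT, φ, dφ, hadm, rfl⟩
  exact action_nonneg hT.le

lemma bdd_shat (hb : LipschitzWith K b) (hx : x₁ ≠ x₂) : BddBelow (shatSet b x₁ x₂) := by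
  refine ⟨0, ?_⟩
  rintro v ⟨φ, db, hadm, rfl⟩
  exact shat_nonneg hb hx hadm

lemma sInf_probII_eq_sInf_shat (hb : LipschitzWith K b) (hx : x₁ ≠ x₂) :
    sInf (probIISet b x₁ x₂) = sInf (shatSet b x₁ x₂) := by
  have hne1 : (probIISet b x₁ x₂).Nonempty :=
    ⟨action b 1 (fun t : ℝ => x₁ + t • (x₂ - x₁)) (fun _ => x₂ - x₁),
      1, one_pos, _, _, line_adm, rfl⟩
  have hne2 : (shatSet b x₁ x₂).Nonempty :=
    ⟨Shat b (fun t : ℝ => x₁ + t • (x₂ - x₁)) (fun _ => x₂ - x₁), _, _, line_adm, rfl⟩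
  have hbdd1 : BddBelow (probIISet b x₁ x₂) := bdd_probII
  have hbdd2 : BddBelow (shatSet b x₁ x₂) := bdd_shat hb hx
  apply le_antisymm
  · -- sInf probII ≤ sInf shat
    apply le_csInf hne2
    rintro w ⟨φ, db, hadm, rfl⟩
    obtain ⟨hA, hB, hC⟩ := h1_package hb hadm.1
    have ha := a_pos hadm hx
    have hβ0 : (0:ℝ) ≤ L2norm 1 (fun s => b (φ s)) := Real.sqrt_nonneg _
    rcases hβ0.lt_or_eq with hβ | hβ
    · -- attained at T = That
      have hT : 0 < L2norm 1 db / L2norm 1 (fun s => b (φ s)) := div_pos ha hβ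
      obtain ⟨hadm', hact⟩ := rescale_up (b := b) hT hadm
      have he := Ssc_eq hA hB hC hT
      have hz : L2norm 1 db - (L2norm 1 db / L2norm 1 (fun s => b (φ s)))
          * L2norm 1 (fun s => b (φ s)) = 0 := by
        field_simp
        ring
      rw [hz] at he
      simp only [ne_eq, OfNat.ofNat_ne_zero, not_false_eq_true, zero_pow, zero_div,
        zero_add] at he
      have hmem : action b (L2norm 1 db / L2norm 1 (fun s => b (φ s)))
          (fun t => φ (t / (L2norm 1 db / L2norm 1 (fun s => b (φ s)))))
          (fun t => (L2norm 1 db / L2norm 1 (fun s => b (φ s)))⁻¹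
            • db (t / (L2norm 1 db / L2norm 1 (fun s => b (φ s)))))
          ∈ probIISet b x₁ x₂ := ⟨_, hT, _, _, hadm', rfl⟩
      calc sInf (probIISet b x₁ x₂) ≤ _ := csInf_le hbdd1 hmem
        _ = Shat b φ db := by rw [hact, he]
    · -- β = 0 : approximate
      apply le_of_forall_pos_le_add
      intro ε hε
      set T : ℝ := (L2norm 1 db)^2 / ε with hTdef
      have hTpos : 0 < T := div_pos (by positivity) hε
      obtain ⟨hadm', hact⟩ := rescale_up (b := b) hTpos hadm
      have he := Ssc_eq hA hB hC hTpos
      rw [← hβ, mul_zero, sub_zero] at he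
      have he2 : (L2norm 1 db)^2 / (2*T) = ε/2 := by
        rw [hTdef]
        have hane : L2norm 1 db ≠ 0 := ha.ne'
        field_simp
      rw [he2] at he
      have hmem : action b T (fun t => φ (t / T)) (fun t => T⁻¹ • db (t / T))
          ∈ probIISet b x₁ x₂ := ⟨T, hTpos, _, _, hadm', rfl⟩
      calc sInf (probIISet b x₁ x₂) ≤ _ := csInf_le hbdd1 hmem
        _ = ε/2 + Shat b φ db := by rw [hact, he]
        _ ≤ Shat b φ db + ε := by linarith
  · -- sInf shat ≤ sInf probII
    apply le_csInf hne1
    rintro v ⟨T, hT, φ, dφ, hadm, rfl⟩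
    obtain ⟨hadm1, hact⟩ := rescale_down (b := b) hT hadm
    obtain ⟨hA, hB, hC⟩ := h1_package hb hadm1.1
    have he := Ssc_eq hA hB hC hT
    have hmem : Shat b (fun s => φ (s * T)) (fun s => T • dφ (s * T)) ∈ shatSet b x₁ x₂ :=
      ⟨_, _, hadm1, rfl⟩
    calc sInf (shatSet b x₁ x₂) ≤ _ := csInf_le hbdd2 hmem
      _ ≤ action b T φ dφ := by
          rw [hact, he]
          have : 0 ≤ (L2norm 1 (fun s => T • dφ (s * T))
              - T * L2norm 1 (fun s => b (φ (s * T))))^2 / (2*T) := by positivity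
          linarith

end Aux

/-- equivalence between minimizers of Problem II and minimizers of the
reformulated functional `Ŝ` on `A₁`.
(i) If `(T*, φ*)` with `0 < T* < ∞` attains the double infimum, then the rescaled path
`φ̄*(s) = φ*(sT*)` satisfies `S_{T*}(φ*) = Ŝ(φ̄*) = inf_{A₁} Ŝ` and `T* = T̂(φ̄*)`.
(ii) Conversely, if `φ̄*` minimizes `Ŝ` over `A₁` and `T* := T̂(φ̄*) ∈ (0,∞)`, then
`φ*(t) = φ̄*(t/T*)` attains the double infimum. -/
theorem stmt3 {n : ℕ} (b : EuclideanSpace ℝ (Fin n) → EuclideanSpace ℝ (Fin n))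
    (K : NNReal) (hb : LipschitzWith K b)
    (x₁ x₂ : EuclideanSpace ℝ (Fin n)) (hx : x₁ ≠ x₂) :
    -- (i)
    (∀ (Tstar : ℝ) (φ dφ : ℝ → EuclideanSpace ℝ (Fin n)),
      0 < Tstar → Adm Tstar x₁ x₂ φ dφ →
      action b Tstar φ dφ = sInf (probIISet b x₁ x₂) →
      action b Tstar φ dφ
          = Shat b (fun s => φ (s * Tstar)) (fun s => Tstar • dφ (s * Tstar)) ∧
      Shat b (fun s => φ (s * Tstar)) (fun s => Tstar • dφ (s * Tstar))
          = sInf (shatSet b x₁ x₂) ∧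
      Tstar = That b (fun s => φ (s * Tstar)) (fun s => Tstar • dφ (s * Tstar))) ∧
    -- (ii)
    (∀ (φbar dbar : ℝ → EuclideanSpace ℝ (Fin n)),
      Adm 1 x₁ x₂ φbar dbar →
      Shat b φbar dbar = sInf (shatSet b x₁ x₂) →
      0 < That b φbar dbar →
      action b (That b φbar dbar)
          (fun t => φbar (t / That b φbar dbar))
          (fun t => (That b φbar dbar)⁻¹ • dbar (t / That b φbar dbar))
        = sInf (probIISet b x₁ x₂)) := by
  have heq := sInf_probII_eq_sInf_shat (K := K) (b := b) hb hx
  constructor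
  · -- (i)
    intro Tstar φ dφ hT hadm hmin
    obtain ⟨hadm1, hact⟩ := rescale_down (b := b) hT hadm
    obtain ⟨hA, hB, hC⟩ := h1_package hb hadm1.1
    have he := Ssc_eq hA hB hC hT
    have ha := a_pos hadm1 hx
    have hβ0 : (0:ℝ) ≤ L2norm 1 (fun s => b (φ (s * Tstar))) := Real.sqrt_nonneg _
    have hmem : Shat b (fun s => φ (s * Tstar)) (fun s => Tstar • dφ (s * Tstar))
        ∈ shatSet b x₁ x₂ := ⟨_, _, hadm1, rfl⟩
    have hinf_le : sInf (shatSet b x₁ x₂)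
        ≤ Shat b (fun s => φ (s * Tstar)) (fun s => Tstar • dφ (s * Tstar)) :=
      csInf_le (bdd_shat hb hx) hmem
    have hchain : (L2norm 1 (fun s => Tstar • dφ (s * Tstar))
          - Tstar * L2norm 1 (fun s => b (φ (s * Tstar))))^2 / (2*Tstar)
          + Shat b (fun s => φ (s * Tstar)) (fun s => Tstar • dφ (s * Tstar))
        = sInf (shatSet b x₁ x₂) := by
      rw [← he, ← hact, hmin, heq]
    have hD0 : (L2norm 1 (fun s => Tstar • dφ (s * Tstar))
        - Tstar * L2norm 1 (fun s => b (φ (s * Tstar))))^2 / (2*Tstar) = 0 := by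
      have hge : (0:ℝ) ≤ (L2norm 1 (fun s => Tstar • dφ (s * Tstar))
          - Tstar * L2norm 1 (fun s => b (φ (s * Tstar))))^2 / (2*Tstar) := by positivity
      linarith
    have hab : L2norm 1 (fun s => Tstar • dφ (s * Tstar))
        = Tstar * L2norm 1 (fun s => b (φ (s * Tstar))) := by
      have h2T : (2*Tstar) ≠ 0 := by positivity
      have hnum := (div_eq_zero_iff.1 hD0).resolve_right h2T
      have := pow_eq_zero_iff two_ne_zero |>.mp hnum
      linarith
    have g1 : action b Tstar φ dφ
        = Shat b (fun s => φ (s * Tstar)) (fun s => Tstar • dφ (s * Tstar)) := by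
      rw [hact, he, hD0, zero_add]
    refine ⟨g1, by rw [← g1, hmin, heq], ?_⟩
    have hβpos : 0 < L2norm 1 (fun s => b (φ (s * Tstar))) := by
      rcases hβ0.lt_or_eq with h | h
      · exact h
      · exfalso
        rw [← h, mul_zero] at hab
        exact ha.ne' hab
    show Tstar = L2norm 1 (fun s => Tstar • dφ (s * Tstar))
        / L2norm 1 (fun s => b (φ (s * Tstar)))
    rw [hab, mul_div_assoc, div_self hβpos.ne', mul_one]
  · -- (ii)
    intro φbar dbar hadm hmin hTpos
    obtain ⟨hA, hB, hC⟩ := h1_package hb hadm.1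
    have hβ0 : (0:ℝ) ≤ L2norm 1 (fun s => b (φbar s)) := Real.sqrt_nonneg _
    have hβpos : 0 < L2norm 1 (fun s => b (φbar s)) := by
      rcases hβ0.lt_or_eq with h | h
      · exact h
      · exfalso
        rw [That, ← h, div_zero] at hTpos
        exact lt_irrefl 0 hTpos
    obtain ⟨hadm', hact⟩ := rescale_up (b := b) hTpos hadm
    have he := Ssc_eq hA hB hC hTpos
    have hz : L2norm 1 dbar - (That b φbar dbar) * L2norm 1 (fun s => b (φbar s)) = 0 := by
      rw [That, div_mul_cancel₀ _ hβpos.ne', sub_self]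
    calc action b (That b φbar dbar)
          (fun t => φbar (t / That b φbar dbar))
          (fun t => (That b φbar dbar)⁻¹ • dbar (t / That b φbar dbar))
        = Ssc b (That b φbar dbar) φbar dbar := hact
      _ = Shat b φbar dbar := by
          rw [he, hz]
          norm_num
      _ = sInf (shatSet b x₁ x₂) := hmin
      _ = sInf (probIISet b x₁ x₂) := heq.symm
end
end

section
/- Let b : ℝⁿ → ℝⁿ be globally Lipschitz and fix T > 0 and x₁, x₂ ∈ ℝⁿ. Then there exists at least one φ* ∈ A_T such that S_T(φ*) = min_{φ∈A_T} S_T(φ), i.e. the Freidlin–Wentzell action functional attains its infimum over the admissible set A_T. -/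
open MeasureTheory Filter intervalIntegral
open scoped RealInnerProductSpace Topology

noncomputable section

section wcsec
open Set

theorem weak_seq_compact {E : Type*} [NormedAddCommGroup E] [InnerProductSpace ℝ E]
    [CompleteSpace E] (x : ℕ → E) (M : ℝ) (hM : ∀ k, ‖x k‖ ≤ M) :
    ∃ (z : E) (ψ : ℕ → ℕ), StrictMono ψ ∧
      ∀ y : E, Tendsto (fun k => ⟪x (ψ k), y⟫) atTop (𝓝 ⟪z, y⟫) := by
  have M0 : 0 ≤ M := le_trans (norm_nonneg (x 0)) (hM 0)
  set S : Submodule ℝ E := (Submodule.span ℝ (Set.range x)).topologicalClosure with hS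
  have hSclosed : IsClosed (S : Set E) := Submodule.isClosed_topologicalClosure _
  haveI : CompleteSpace S := hSclosed.completeSpace_coe
  haveI : TopologicalSpace.SeparableSpace S := by
    have h1 : TopologicalSpace.IsSeparable (Set.range x) := (Set.countable_range x).isSeparable
    have h2 := h1.span (R := ℝ)
    have h3 : TopologicalSpace.IsSeparable (S : Set E) := by
      rw [hS, Submodule.topologicalClosure_coe]
      exact h2.closure
    exact h3.separableSpace
  haveI : Nonempty S := ⟨0⟩
  obtain ⟨D, hDc, hDd⟩ := TopologicalSpace.exists_countable_dense S
  have hDne : D.Nonempty := hDd.nonempty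
  obtain ⟨u, hu⟩ := hDc.exists_eq_range hDne
  have hmemS : ∀ k, x k ∈ S :=
    fun k => Submodule.le_topologicalClosure _ (Submodule.subset_span (Set.mem_range_self k))
  set F : ℕ → ℕ → ℝ := fun k i => ⟪x k, (u i : E)⟫ with hF
  have hFmem : ∀ k, F k ∈ Set.pi Set.univ (fun i => Icc (-(M * ‖(u i : E)‖)) (M * ‖(u i : E)‖)) := by
    intro k
    rw [Set.mem_univ_pi]
    intro i
    have h := abs_real_inner_le_norm (x k) (u i : E)
    have h2 : ‖x k‖ * ‖(u i : E)‖ ≤ M * ‖(u i : E)‖ :=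
      mul_le_mul_of_nonneg_right (hM k) (norm_nonneg _)
    have := abs_le.mp (h.trans h2)
    exact ⟨this.1, this.2⟩
  have hcomp : IsCompact (Set.pi Set.univ fun i => Icc (-(M * ‖(u i : E)‖)) (M * ‖(u i : E)‖)) :=
    isCompact_univ_pi fun i => isCompact_Icc
  obtain ⟨a, -, ψ, hψ, hconv⟩ := hcomp.tendsto_subseq hFmem
  have hptwise : ∀ i, Tendsto (fun k => F (ψ k) i) atTop (𝓝 (a i)) := by
    intro i
    exact (tendsto_pi_nhds.mp hconv) i
  -- Cauchy for each y : S
  have hcauchy : ∀ y : S, CauchySeq (fun k => ⟪x (ψ k), (y : E)⟫) := by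
    intro y
    rw [Metric.cauchySeq_iff]
    intro ε hε
    have hε1 : 0 < ε / (4 * (M + 1)) := by positivity
    obtain ⟨d, hd, hdy⟩ := hDd.exists_dist_lt y hε1
    obtain ⟨i, rfl⟩ : ∃ i, u i = d := by
      rw [hu] at hd; exact hd
    have hC : CauchySeq (fun k => F (ψ k) i) := (hptwise i).cauchySeq
    obtain ⟨N, hN⟩ := Metric.cauchySeq_iff.mp hC (ε / 2) (by positivity)
    refine ⟨N, fun m hm n hn => ?_⟩
    have key : ∀ p, |⟪x p, (y : E)⟫ - ⟪x p, (u i : E)⟫| ≤ M * (ε / (4 * (M + 1))) := by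
      intro p
      rw [← inner_sub_right]
      refine (abs_real_inner_le_norm _ _).trans ?_
      have h1 : ‖(y : E) - (u i : E)‖ = dist y (u i) := by
        rw [Subtype.dist_eq, dist_eq_norm]
      refine mul_le_mul (hM p) ?_ (norm_nonneg _) M0
      rw [h1]
      exact hdy.le
    have hd1 := hN m hm n hn
    rw [Real.dist_eq] at hd1 ⊢
    have hMe : M * (ε / (4 * (M + 1))) ≤ ε / 4 := by
      have h4 : (0:ℝ) < 4 * (M + 1) := by positivity
      rw [show M * (ε / (4 * (M + 1))) = (M * ε) / (4 * (M + 1)) by ring,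
        div_le_div_iff₀ h4 (by positivity : (0:ℝ) < 4)]
      nlinarith [mul_nonneg M0 hε.le]
    calc |⟪x (ψ m), (y:E)⟫ - ⟪x (ψ n), (y:E)⟫|
        ≤ |⟪x (ψ m), (y:E)⟫ - ⟪x (ψ m), (u i : E)⟫| + |⟪x (ψ m), (u i:E)⟫ - ⟪x (ψ n), (u i:E)⟫|
            + |⟪x (ψ n), (u i : E)⟫ - ⟪x (ψ n), (y:E)⟫| := by
          have := abs_sub_le (⟪x (ψ m), (y:E)⟫) (⟪x (ψ m), (u i:E)⟫) (⟪x (ψ n), (y:E)⟫)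
          have h2 := abs_sub_le (⟪x (ψ m), (u i:E)⟫) (⟪x (ψ n), (u i:E)⟫) (⟪x (ψ n), (y:E)⟫)
          linarith
      _ < ε := by
          have k1 := key (ψ m)
          have k2 : |⟪x (ψ n), (u i : E)⟫ - ⟪x (ψ n), (y:E)⟫| ≤ M * (ε / (4 * (M + 1))) := by
            rw [abs_sub_comm]; exact key (ψ n)
          have : |⟪x (ψ m), (u i:E)⟫ - ⟪x (ψ n), (u i:E)⟫| < ε / 2 := hd1
          linarith
  have hlim : ∀ y : S, ∃ l, Tendsto (fun k => ⟪x (ψ k), (y : E)⟫) atTop (𝓝 l) :=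
    fun y => cauchySeq_tendsto_of_complete (hcauchy y)
  choose L hL using hlim
  have hfb : ∀ y : S, |L y| ≤ M * ‖y‖ := by
    intro y
    refine le_of_tendsto (hL y).abs (Filter.Eventually.of_forall fun k => ?_)
    refine (abs_real_inner_le_norm _ _).trans ?_
    exact mul_le_mul_of_nonneg_right (hM _) (norm_nonneg _)
  set f : S →ₗ[ℝ] ℝ :=
    { toFun := L
      map_add' := by
        intro y z
        refine tendsto_nhds_unique (hL (y + z)) ?_
        have := (hL y).add (hL z)
        refine Tendsto.congr (fun k => ?_) this
        rw [Submodule.coe_add, inner_add_right]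
      map_smul' := by
        intro c y
        refine tendsto_nhds_unique (hL (c • y)) ?_
        have := (hL y).const_mul c
        refine Tendsto.congr (fun k => ?_) this
        rw [Submodule.coe_smul, inner_smul_right]
        } with hf
  set F' : S →L[ℝ] ℝ := LinearMap.mkContinuous f M (fun y => by
    rw [Real.norm_eq_abs]; exact hfb y) with hF'
  set z₀ : S := (InnerProductSpace.toDual ℝ S).symm F' with hz₀def
  have hz₀ : ∀ y : S, ⟪z₀, y⟫ = L y := by
    intro y
    rw [hz₀def]
    exact InnerProductSpace.toDual_symm_apply
  refine ⟨(z₀ : E), ψ, hψ, ?_⟩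
  intro y
  set P : S := S.orthogonalProjectionOnto y with hP
  have key : ∀ v : S, ⟪(v : E), y⟫ = ⟪(v : E), (P : E)⟫ := by
    intro v
    have horth : y - (P : E) ∈ Sᗮ := by exact Submodule.sub_starProjection_mem_orthogonal y
    have := (Submodule.mem_orthogonal S (y - (P : E))).mp horth (v : E) v.2
    rw [inner_sub_right] at this
    linarith
  have h1 : (fun k => ⟪x (ψ k), y⟫) = fun k => ⟪x (ψ k), (P : E)⟫ := by
    funext k
    exact key ⟨x (ψ k), hmemS (ψ k)⟩
  have h2 : ⟪(z₀ : E), y⟫ = L P := by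
    rw [key z₀, ← Submodule.coe_inner, hz₀ P]
  rw [h1, h2]
  exact hL P
end wcsec
section helpers

open Set

variable {n : ℕ} {T : ℝ}

local notation "E2" => EuclideanSpace ℝ (Fin n)
local notation "μT" => MeasureTheory.volume.restrict (Set.Ioc (0:ℝ) T)

theorem finiteIoc (T : ℝ) : IsFiniteMeasure (MeasureTheory.volume.restrict (Set.Ioc (0:ℝ) T)) :=
  ⟨by rw [Measure.restrict_apply_univ]; exact measure_Ioc_lt_top⟩

theorem integrable_inner_of_mem {f g : ℝ → E2} (hf : MemLp f 2 μT) (hg : MemLp g 2 μT) :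
    Integrable (fun a => ⟪f a, g a⟫) μT := by
  have h := MeasureTheory.L2.integrable_inner (𝕜 := ℝ) (hf.toLp f) (hg.toLp g)
  apply h.congr
  filter_upwards [hf.coeFn_toLp, hg.coeFn_toLp] with a h1 h2
  rw [h1, h2]

theorem sq_norm_integrable {f : ℝ → E2} (hf : MemLp f 2 μT) :
    Integrable (fun a => ‖f a‖^2) μT := by
  apply (integrable_inner_of_mem hf hf).congr
  filter_upwards with a
  rw [real_inner_self_eq_norm_sq]

theorem continuousOn_memℒp {g : ℝ → E2} (hc : ContinuousOn g (Icc (0:ℝ) T)) :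
    MemLp g 2 μT := by
  haveI := finiteIoc T
  obtain ⟨C, hC⟩ := isCompact_Icc.exists_bound_of_continuousOn hc
  refine MemLp.of_bound ((hc.mono Ioc_subset_Icc_self).aestronglyMeasurable measurableSet_Ioc)
    C ?_
  filter_upwards [ae_restrict_mem measurableSet_Ioc] with t ht
  exact hC t (Ioc_subset_Icc_self ht)

theorem h1path_continuousOn {φ dφ : ℝ → E2} (hT : 0 ≤ T) (h : IsH1Path T φ dφ) :
    ContinuousOn φ (Icc (0:ℝ) T) := by
  haveI := finiteIoc T
  have hi : IntegrableOn dφ (Icc (0:ℝ) T) volume :=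
    (integrableOn_Icc_iff_integrableOn_Ioc).mpr (h.1.integrable one_le_two)
  have hc := intervalIntegral.continuousOn_primitive (μ := volume) (a := (0:ℝ)) (b := T) hi
  refine ContinuousOn.congr ((continuousOn_const (c := φ 0)).add hc) ?_
  intro t ht
  rw [h.2 t ht, intervalIntegral.integral_of_le ht.1]; rfl

theorem h1path_intervalIntegrable {φ dφ : ℝ → E2} (h : IsH1Path T φ dφ)
    {t : ℝ} (ht : t ∈ Icc (0:ℝ) T) : IntervalIntegrable dφ volume 0 t := by
  haveI := finiteIoc T
  exact (intervalIntegrable_iff_integrableOn_Ioc_of_le ht.1).mpr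
    ((show IntegrableOn dφ (Set.Ioc (0:ℝ) T) volume from h.1.integrable one_le_two).mono_set
      (Ioc_subset_Ioc_right ht.2))

theorem h1path_sub_eq {φ dφ : ℝ → E2} (h : IsH1Path T φ dφ) {t : ℝ} (ht : t ∈ Icc (0:ℝ) T) :
    φ t - φ 0 = ∫ s in (0:ℝ)..t, dφ s := by
  rw [h.2 t ht]; abel

theorem lip_norm_le {b : E2 → E2} {K : NNReal} (hb : LipschitzWith K b) (x y : E2) :
    ‖b y‖ ≤ ‖b x‖ + K * ‖y - x‖ := by
  have h1 : ‖b y - b x‖ ≤ K * ‖y - x‖ := by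
    simpa [dist_eq_norm] using hb.dist_le_mul y x
  have h2 := norm_sub_norm_le (b y) (b x)
  linarith

end helpers
section gron

open Set

variable {n : ℕ}

local notation "E2" => EuclideanSpace ℝ (Fin n)

/-- auxiliary constant in the a priori estimate -/
def Abnd (T C₀ B : ℝ) : ℝ := (T + C₀)/2 + B * T

/-- uniform bound for minimizing sequences -/
def Ubnd (T C₀ B K : ℝ) : ℝ := Abnd T C₀ B + K * gronwallBound 0 K (Abnd T C₀ B) T

theorem uniform_bound {T : ℝ} (hT : 0 ≤ T) (b : E2 → E2) (K : NNReal)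
    (hb : LipschitzWith K b) (x₁ : E2) {φ dφ : ℝ → E2} (h : IsH1Path T φ dφ)
    (hφ0 : φ 0 = x₁) {C₀ : ℝ} (hC : ∫ t in (0:ℝ)..T, ‖dφ t - b (φ t)‖^2 ≤ C₀) :
    (∀ t ∈ Icc (0:ℝ) T, ‖φ t - x₁‖ ≤ Ubnd T C₀ ‖b x₁‖ K) ∧
      ∫ t in (0:ℝ)..T, ‖dφ t‖^2 ≤ 2*C₀ + 2*T*(‖b x₁‖ + K * Ubnd T C₀ ‖b x₁‖ K)^2 := by
  haveI := finiteIoc T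
  set B : ℝ := ‖b x₁‖ with hB
  set A : ℝ := Abnd T C₀ B with hA
  set U : ℝ := Ubnd T C₀ B K with hU
  set f : ℝ → E2 := fun s => dφ s - b (φ s) with hf
  have hcont : ContinuousOn φ (Icc (0:ℝ) T) := h1path_continuousOn hT h
  have hbφmem : MemLp (fun s => b (φ s)) 2 (volume.restrict (Ioc (0:ℝ) T)) :=
    continuousOn_memℒp (hb.continuous.comp_continuousOn hcont)
  have hfmem : MemLp f 2 (volume.restrict (Ioc (0:ℝ) T)) := h.1.sub hbφmem
  have hfIntOn : IntegrableOn f (Ioc (0:ℝ) T) volume := hfmem.integrable one_le_two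
  have hf2IntOn : IntegrableOn (fun s => ‖f s‖^2) (Ioc (0:ℝ) T) volume :=
    sq_norm_integrable hfmem
  have hdIntOn : IntegrableOn dφ (Ioc (0:ℝ) T) volume := h.1.integrable one_le_two
  have hd2IntOn : IntegrableOn (fun s => ‖dφ s‖^2) (Ioc (0:ℝ) T) volume :=
    sq_norm_integrable h.1
  have hfsq_le : ∫ s in Ioc (0:ℝ) T, ‖f s‖^2 ≤ C₀ := by
    rwa [intervalIntegral.integral_of_le hT] at hC
  -- bound on the L¹ norm of f on subintervals
  have hIf : ∀ t ∈ Icc (0:ℝ) T, (∫ s in Ioc (0:ℝ) t, ‖f s‖) ≤ (T + C₀)/2 := by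
    intro t ht
    have hsub : Ioc (0:ℝ) t ⊆ Ioc (0:ℝ) T := Ioc_subset_Ioc_right ht.2
    have hint1 : IntegrableOn (fun s => ‖f s‖) (Ioc (0:ℝ) t) volume :=
      (hfIntOn.mono_set hsub).norm
    have hint2 : IntegrableOn (fun s => (1 + ‖f s‖^2)/2) (Ioc (0:ℝ) t) volume :=
      ((((integrableOn_const_iff).mpr (Or.inr measure_Ioc_lt_top)).add
        (hf2IntOn.mono_set hsub))).div_const 2
    have h1 : (∫ s in Ioc (0:ℝ) t, ‖f s‖) ≤ ∫ s in Ioc (0:ℝ) t, (1 + ‖f s‖^2)/2 := by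
      refine setIntegral_mono_on hint1 hint2 measurableSet_Ioc (fun s _ => ?_)
      nlinarith [sq_nonneg (1 - ‖f s‖), norm_nonneg (f s)]
    have h2 : (∫ s in Ioc (0:ℝ) t, (1 + ‖f s‖^2)/2)
        = ((∫ s in Ioc (0:ℝ) t, (1:ℝ)) + ∫ s in Ioc (0:ℝ) t, ‖f s‖^2)/2 := by
      rw [MeasureTheory.integral_div, MeasureTheory.integral_add
        ((integrableOn_const_iff (C := (1:ℝ))).mpr (Or.inr measure_Ioc_lt_top)) (hf2IntOn.mono_set hsub)]
    have h3 : (∫ s in Ioc (0:ℝ) t, (1:ℝ)) = t := by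
      rw [setIntegral_const, measureReal_def, Real.volume_Ioc, smul_eq_mul, mul_one, sub_zero,
        ENNReal.toReal_ofReal ht.1]
    have h4 : (∫ s in Ioc (0:ℝ) t, ‖f s‖^2) ≤ ∫ s in Ioc (0:ℝ) T, ‖f s‖^2 :=
      setIntegral_mono_set hf2IntOn (Filter.Eventually.of_forall (fun s => sq_nonneg _))
        (HasSubset.Subset.eventuallyLE hsub)
    rw [h2, h3] at h1
    have := ht.2
    linarith
  -- the continuous modulus
  set c : ℝ → ℝ := fun s => max 0 (min s T) with hc
  have hc_cont : Continuous c := continuous_const.max (continuous_id.min continuous_const)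
  have hc_mem : ∀ s, c s ∈ Icc (0:ℝ) T := fun s =>
    ⟨le_max_left _ _, max_le hT (min_le_right _ _)⟩
  have hc_eq : ∀ s ∈ Icc (0:ℝ) T, c s = s := fun s hs => by
    rw [hc]; simp only [min_eq_left hs.2, max_eq_right hs.1]
  set uc : ℝ → ℝ := fun s => ‖φ (c s) - x₁‖ with huc
  have huc_cont : Continuous uc :=
    ((hcont.comp_continuous hc_cont hc_mem).sub continuous_const).norm
  have huc_nonneg : ∀ s, 0 ≤ uc s := fun s => norm_nonneg _
  have huc_eq : ∀ s ∈ Icc (0:ℝ) T, uc s = ‖φ s - x₁‖ := fun s hs => by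
    rw [huc]; simp only [hc_eq s hs]
  set G : ℝ → ℝ := fun r => ∫ s in (0:ℝ)..r, uc s with hG
  have hG_deriv : ∀ r : ℝ, HasDerivAt G (uc r) r := fun r =>
    intervalIntegral.integral_hasDerivAt_right (huc_cont.intervalIntegrable _ _)
      huc_cont.stronglyMeasurable.stronglyMeasurableAtFilter huc_cont.continuousAt
  have hG_nonneg : ∀ r, 0 ≤ r → 0 ≤ G r := fun r hr =>
    intervalIntegral.integral_nonneg hr (fun s _ => huc_nonneg s)
  have hG_mono : ∀ t ∈ Icc (0:ℝ) T, G t ≤ G T := by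
    intro t ht
    have hGT : G T = G t + ∫ s in t..T, uc s := by
      rw [hG]
      exact (intervalIntegral.integral_add_adjacent_intervals
        (huc_cont.intervalIntegrable _ _) (huc_cont.intervalIntegrable _ _)).symm
    rw [hGT]
    have : 0 ≤ ∫ s in t..T, uc s :=
      intervalIntegral.integral_nonneg ht.2 (fun s _ => huc_nonneg s)
    linarith
  -- the integral inequality
  have hu_ineq : ∀ t ∈ Icc (0:ℝ) T, uc t ≤ A + K * G t := by
    intro t ht
    have hsub : Ioc (0:ℝ) t ⊆ Ioc (0:ℝ) T := Ioc_subset_Ioc_right ht.2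
    have h1 : uc t = ‖∫ s in (0:ℝ)..t, dφ s‖ := by
      rw [huc_eq t ht, ← hφ0, h1path_sub_eq h ht]
    have h2 : ‖∫ s in (0:ℝ)..t, dφ s‖ ≤ ∫ s in (0:ℝ)..t, ‖dφ s‖ :=
      intervalIntegral.norm_integral_le_integral_norm ht.1
    have h3 : (∫ s in (0:ℝ)..t, ‖dφ s‖) = ∫ s in Ioc (0:ℝ) t, ‖dφ s‖ :=
      intervalIntegral.integral_of_le ht.1
    have hint1 : IntegrableOn (fun s => ‖dφ s‖) (Ioc (0:ℝ) t) volume :=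
      (hdIntOn.mono_set hsub).norm
    have hintc : IntegrableOn (fun s => B + (K:ℝ) * uc s) (Ioc (0:ℝ) t) volume :=
      ((integrableOn_const_iff).mpr (Or.inr measure_Ioc_lt_top)).add
        ((huc_cont.integrableOn_Ioc).const_mul _)
    have hint2 : IntegrableOn (fun s => ‖f s‖ + (B + (K:ℝ) * uc s)) (Ioc (0:ℝ) t) volume :=
      ((hfIntOn.mono_set hsub).norm).add hintc
    have h4 : (∫ s in Ioc (0:ℝ) t, ‖dφ s‖)
        ≤ ∫ s in Ioc (0:ℝ) t, (‖f s‖ + (B + (K:ℝ) * uc s)) := by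
      refine setIntegral_mono_on hint1 hint2 measurableSet_Ioc (fun s hs => ?_)
      have hsI : s ∈ Icc (0:ℝ) T := ⟨hs.1.le, hs.2.trans ht.2⟩
      have hd : dφ s = f s + b (φ s) := by simp [hf]
      have h5 : ‖dφ s‖ ≤ ‖f s‖ + ‖b (φ s)‖ := by rw [hd]; exact norm_add_le _ _
      have h6 : ‖b (φ s)‖ ≤ B + (K:ℝ) * ‖φ s - x₁‖ := lip_norm_le hb x₁ (φ s)
      rw [← huc_eq s hsI] at h6
      linarith
    have e2 : (∫ s in Ioc (0:ℝ) t, (B + (K:ℝ) * uc s)) = B * t + (K:ℝ) * G t := by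
      rw [MeasureTheory.integral_add ((integrableOn_const_iff (C := B)).mpr (Or.inr measure_Ioc_lt_top))
          ((huc_cont.integrableOn_Ioc).const_mul _),
        MeasureTheory.integral_const_mul, setIntegral_const, measureReal_def, Real.volume_Ioc, smul_eq_mul,
        sub_zero, ENNReal.toReal_ofReal ht.1,
        show G t = ∫ s in Ioc (0:ℝ) t, uc s from intervalIntegral.integral_of_le ht.1]
      ring
    have h7 : (∫ s in Ioc (0:ℝ) t, (‖f s‖ + (B + (K:ℝ) * uc s)))
        = (∫ s in Ioc (0:ℝ) t, ‖f s‖) + (B * t + (K:ℝ) * G t) := by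
      rw [MeasureTheory.integral_add ((hfIntOn.mono_set hsub).norm) hintc, e2]
    have h8 : B * t ≤ B * T := mul_le_mul_of_nonneg_left ht.2 (norm_nonneg _)
    have h9 := hIf t ht
    rw [h1]
    rw [h3] at h2
    rw [hA]
    unfold Abnd
    linarith
  -- Grönwall
  have hGb : ∀ t ∈ Icc (0:ℝ) T, ‖G t‖ ≤ gronwallBound 0 K A (t - 0) := by
    refine norm_le_gronwallBound_of_norm_deriv_right_le
      (fun r _ => (hG_deriv r).continuousAt.continuousWithinAt)
      (fun r _ => (hG_deriv r).hasDerivWithinAt) ?_ ?_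
    · rw [hG]
      simp [intervalIntegral.integral_same]
    · intro r hr
      have hrI : r ∈ Icc (0:ℝ) T := ⟨hr.1, hr.2.le⟩
      rw [Real.norm_eq_abs, Real.norm_eq_abs, abs_of_nonneg (huc_nonneg r),
        abs_of_nonneg (hG_nonneg r hr.1)]
      have := hu_ineq r hrI
      linarith
  have hGT : G T ≤ gronwallBound 0 K A T := by
    have := hGb T ⟨hT, le_refl T⟩
    rwa [Real.norm_eq_abs, abs_of_nonneg (hG_nonneg T hT), sub_zero] at this
  have part1 : ∀ t ∈ Icc (0:ℝ) T, ‖φ t - x₁‖ ≤ U := by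
    intro t ht
    rw [← huc_eq t ht]
    have h1 := hu_ineq t ht
    have h2 : (K:ℝ) * G t ≤ (K:ℝ) * gronwallBound 0 K A T :=
      mul_le_mul_of_nonneg_left ((hG_mono t ht).trans hGT) K.2
    rw [hU]
    unfold Ubnd
    rw [← hA]
    linarith
  refine ⟨part1, ?_⟩
  rw [intervalIntegral.integral_of_le hT]
  have hmono : (∫ s in Ioc (0:ℝ) T, ‖dφ s‖^2)
      ≤ ∫ s in Ioc (0:ℝ) T, (2*‖f s‖^2 + 2*(B + (K:ℝ)*U)^2) := by
    refine setIntegral_mono_on hd2IntOn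
      (((hf2IntOn.const_mul 2)).add ((integrableOn_const_iff).mpr (Or.inr measure_Ioc_lt_top)))
      measurableSet_Ioc (fun s hs => ?_)
    have hsI : s ∈ Icc (0:ℝ) T := ⟨hs.1.le, hs.2⟩
    have hd : dφ s = f s + b (φ s) := by simp [hf]
    have h5 : ‖dφ s‖ ≤ ‖f s‖ + ‖b (φ s)‖ := by rw [hd]; exact norm_add_le _ _
    have h6 : ‖b (φ s)‖ ≤ B + (K:ℝ) * ‖φ s - x₁‖ := lip_norm_le hb x₁ (φ s)
    have h7 : (K:ℝ) * ‖φ s - x₁‖ ≤ (K:ℝ) * U :=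
      mul_le_mul_of_nonneg_left (part1 s hsI) K.2
    have h8 : ‖dφ s‖ ≤ ‖f s‖ + (B + (K:ℝ)*U) := by linarith
    nlinarith [norm_nonneg (dφ s), norm_nonneg (f s),
      sq_nonneg (‖f s‖ - (B + (K:ℝ)*U)), sq_nonneg (‖f s‖ + (B + (K:ℝ)*U))]
  have hsplit : (∫ s in Ioc (0:ℝ) T, (2*‖f s‖^2 + 2*(B + (K:ℝ)*U)^2))
      = 2*(∫ s in Ioc (0:ℝ) T, ‖f s‖^2) + 2*(B + (K:ℝ)*U)^2 * T := by
    rw [MeasureTheory.integral_add ((hf2IntOn.const_mul 2))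
        ((integrableOn_const_iff (C := 2*(B + (K:ℝ)*U)^2)).mpr (Or.inr measure_Ioc_lt_top)),
      MeasureTheory.integral_const_mul, setIntegral_const, measureReal_def, Real.volume_Ioc, smul_eq_mul,
      sub_zero, ENNReal.toReal_ofReal hT]
    ring
  rw [hsplit] at hmono
  have : 2*(∫ s in Ioc (0:ℝ) T, ‖f s‖^2) ≤ 2*C₀ := by linarith
  linarith

end gron
section findim

open Set

theorem tendsto_of_inner_tendsto {n : ℕ} {v : ℕ → EuclideanSpace ℝ (Fin n)}
    {x : EuclideanSpace ℝ (Fin n)}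
    (h : ∀ c : EuclideanSpace ℝ (Fin n),
      Tendsto (fun k => ⟪v k, c⟫) atTop (𝓝 ⟪x, c⟫)) :
    Tendsto v atTop (𝓝 x) := by
  have he : Tendsto (fun k => (EuclideanSpace.equiv (Fin n) ℝ) (v k)) atTop
      (𝓝 ((EuclideanSpace.equiv (Fin n) ℝ) x)) := by
    rw [tendsto_pi_nhds]
    intro i
    have hc := h (EuclideanSpace.single i (1:ℝ))
    simpa [EuclideanSpace.inner_single_right] using hc
  have h2 := ((EuclideanSpace.equiv (Fin n) ℝ).symm.continuous.tendsto _).comp he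
  rw [(EuclideanSpace.equiv (Fin n) ℝ).symm_apply_apply] at h2
  exact h2.congr (fun k => (EuclideanSpace.equiv (Fin n) ℝ).symm_apply_apply (v k))

variable {n : ℕ} {T : ℝ}

local notation "E2" => EuclideanSpace ℝ (Fin n)
local notation "μT" => MeasureTheory.volume.restrict (Set.Ioc (0:ℝ) T)

theorem inner_toLp_eq {f g : ℝ → E2} (hf : MemLp f 2 μT) (hg : MemLp g 2 μT) :
    ⟪hf.toLp f, hg.toLp g⟫ = ∫ a, ⟪f a, g a⟫ ∂(MeasureTheory.volume.restrict (Set.Ioc (0:ℝ) T)) := by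
  rw [MeasureTheory.L2.inner_def]
  refine integral_congr_ae ?_
  filter_upwards [hf.coeFn_toLp, hg.coeFn_toLp] with a h1 h2
  rw [h1, h2]

theorem inner_test (hT : 0 ≤ T) {g : ℝ → E2} (hg : MemLp g 2 μT) {t : ℝ}
    (ht : t ∈ Icc (0:ℝ) T) (c : E2) :
    ⟪hg.toLp g, (MemLp.toLp _ ((memLp_const c).indicator measurableSet_Ioc :
        MemLp ((Ioc (0:ℝ) t).indicator (fun _ => c)) 2 μT))⟫
      = ⟪∫ s in (0:ℝ)..t, g s, c⟫ := by
  haveI := finiteIoc T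
  have h0 : ⟪hg.toLp g, (MemLp.toLp _ ((memLp_const c).indicator measurableSet_Ioc :
      MemLp ((Ioc (0:ℝ) t).indicator (fun _ => c)) 2 μT))⟫
      = ∫ a, ⟪g a, (Ioc (0:ℝ) t).indicator (fun _ => c) a⟫ ∂(MeasureTheory.volume.restrict (Set.Ioc (0:ℝ) T)) :=
    inner_toLp_eq hg _
  rw [h0]
  have h1 : (fun a => ⟪g a, (Ioc (0:ℝ) t).indicator (fun _ => c) a⟫)
      = (Ioc (0:ℝ) t).indicator (fun a => ⟪g a, c⟫) := by
    funext a
    by_cases ha : a ∈ Ioc (0:ℝ) t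
    · rw [Set.indicator_of_mem ha, Set.indicator_of_mem ha]
    · rw [Set.indicator_of_notMem ha, Set.indicator_of_notMem ha, inner_zero_right]
  rw [h1, MeasureTheory.integral_indicator measurableSet_Ioc]
  have h2 : (MeasureTheory.volume.restrict (Set.Ioc (0:ℝ) T)).restrict (Ioc (0:ℝ) t)
      = MeasureTheory.volume.restrict (Set.Ioc (0:ℝ) t) := by
    rw [Measure.restrict_restrict measurableSet_Ioc,
      Set.inter_eq_self_of_subset_left (Ioc_subset_Ioc_right ht.2)]
  rw [h2]
  have hgi : Integrable g (MeasureTheory.volume.restrict (Set.Ioc (0:ℝ) t)) :=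
    (show IntegrableOn g (Set.Ioc (0:ℝ) T) volume from hg.integrable one_le_two).mono_set
      (Ioc_subset_Ioc_right ht.2)
  have h3 : (∫ a in Ioc (0:ℝ) t, ⟪g a, c⟫) = ⟪∫ a in Ioc (0:ℝ) t, g a, c⟫ := by
    have h4 := integral_inner (𝕜 := ℝ) hgi c
    calc (∫ a in Ioc (0:ℝ) t, ⟪g a, c⟫) = ∫ a in Ioc (0:ℝ) t, ⟪c, g a⟫ := by
          refine integral_congr_ae (Filter.Eventually.of_forall fun a => ?_)
          exact real_inner_comm _ _
      _ = ⟪c, ∫ a in Ioc (0:ℝ) t, g a⟫ := h4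
      _ = ⟪∫ a in Ioc (0:ℝ) t, g a, c⟫ := real_inner_comm _ _
  rw [h3, intervalIntegral.integral_of_le ht.1]

end findim

open Set in
/-- Lemma 3.2: for a globally Lipschitz `b` and `T > 0`, the
Freidlin–Wentzell action functional `S_T` attains its infimum over `A_T`. -/
theorem stmt5 {n : ℕ} (b : EuclideanSpace ℝ (Fin n) → EuclideanSpace ℝ (Fin n))
    (K : NNReal) (hb : LipschitzWith K b)
    (T : ℝ) (hT : 0 < T) (x₁ x₂ : EuclideanSpace ℝ (Fin n)) :
    ∃ φ dφ : ℝ → EuclideanSpace ℝ (Fin n), Adm T x₁ x₂ φ dφ ∧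
      ∀ ψ dψ : ℝ → EuclideanSpace ℝ (Fin n), Adm T x₁ x₂ ψ dψ →
        action b T φ dφ ≤ action b T ψ dψ := by

  haveI := finiteIoc T
  -- the action is nonnegative
  have hact_nonneg : ∀ φ dφ : ℝ → EuclideanSpace ℝ (Fin n), 0 ≤ action b T φ dφ := by
    intro φ dφ
    unfold action
    have := intervalIntegral.integral_nonneg (μ := volume) (f := fun t => ‖dφ t - b (φ t)‖^2) hT.le
      (fun t _ => sq_nonneg _)
    linarith
  -- the admissible value set
  set Aset : Set ℝ := {v | ∃ φ dφ : ℝ → EuclideanSpace ℝ (Fin n),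
    Adm T x₁ x₂ φ dφ ∧ v = action b T φ dφ} with hAset
  -- straight line path
  have hadm₀ : Adm T x₁ x₂ (fun t : ℝ => x₁ + (t/T) • (x₂ - x₁))
      (fun _ : ℝ => T⁻¹ • (x₂ - x₁)) := by
    refine ⟨⟨memLp_const _, fun t ht => ?_⟩, by simp, by
      simp [div_self hT.ne']⟩
    simp only [intervalIntegral.integral_const, sub_zero, zero_div, zero_smul, add_zero,
      smul_smul, div_eq_mul_inv]
    module
  have hne : Aset.Nonempty := ⟨_, _, _, hadm₀, rfl⟩
  have hbdd : BddBelow Aset := ⟨0, fun v hv => by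
    obtain ⟨φ, dφ, _, rfl⟩ := hv; exact hact_nonneg φ dφ⟩
  set m : ℝ := sInf Aset with hm
  have hm_le : ∀ ψ dψ : ℝ → EuclideanSpace ℝ (Fin n), Adm T x₁ x₂ ψ dψ →
      m ≤ action b T ψ dψ := fun ψ dψ hA => csInf_le hbdd ⟨ψ, dψ, hA, rfl⟩
  have hm0 : 0 ≤ m := le_csInf hne (fun v hv => by
    obtain ⟨φ, dφ, _, rfl⟩ := hv; exact hact_nonneg φ dφ)
  -- minimizing sequence
  have hseq : ∀ k : ℕ, ∃ p : (ℝ → EuclideanSpace ℝ (Fin n)) × (ℝ → EuclideanSpace ℝ (Fin n)),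
      Adm T x₁ x₂ p.1 p.2 ∧ action b T p.1 p.2 < m + 1/(k+1) := by
    intro k
    obtain ⟨v, hv, hlt⟩ := Real.lt_sInf_add_pos hne (show (0:ℝ) < 1/(k+1) by positivity)
    obtain ⟨φ, dφ, hA, rfl⟩ := hv
    exact ⟨(φ, dφ), hA, hlt⟩
  choose p hadm hact using hseq
  set C₀ : ℝ := 2*(m+1) with hC₀
  have hC : ∀ k, ∫ t in (0:ℝ)..T, ‖(p k).2 t - b ((p k).1 t)‖^2 ≤ C₀ := by
    intro k
    have h1 := hact k
    unfold action at h1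
    have h2 : (1:ℝ)/(k+1) ≤ 1 := by
      rw [div_le_one (by positivity)]
      have : (0:ℝ) ≤ (k:ℝ) := Nat.cast_nonneg k
      linarith
    rw [hC₀]; linarith
  set B : ℝ := ‖b x₁‖ with hB
  set U : ℝ := Ubnd T C₀ B K with hUdef
  set R2 : ℝ := 2*C₀ + 2*T*(B + K * U)^2 with hR2
  have hbounds : ∀ k, (∀ t ∈ Icc (0:ℝ) T, ‖(p k).1 t - x₁‖ ≤ U) ∧
      ∫ t in (0:ℝ)..T, ‖(p k).2 t‖^2 ≤ R2 :=
    fun k => uniform_bound hT.le b K hb x₁ (hadm k).1 (hadm k).2.1 (hC k)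
  -- lift to L²
  set Dk : ℕ → Lp (EuclideanSpace ℝ (Fin n)) 2 (volume.restrict (Ioc (0:ℝ) T)) :=
    fun k => ((hadm k).1.1).toLp (p k).2 with hDk
  have hDksq : ∀ k, ‖Dk k‖^2 ≤ R2 := by
    intro k
    have h1 : (‖Dk k‖:ℝ)^2 = ⟪Dk k, Dk k⟫ := (real_inner_self_eq_norm_sq _).symm
    have h2 : ⟪Dk k, Dk k⟫ = ∫ a, ⟪(p k).2 a, (p k).2 a⟫ ∂(volume.restrict (Ioc (0:ℝ) T)) :=
      inner_toLp_eq _ _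
    have h3 : (∫ a, ⟪(p k).2 a, (p k).2 a⟫ ∂(volume.restrict (Ioc (0:ℝ) T)))
        = ∫ a, ‖(p k).2 a‖^2 ∂(volume.restrict (Ioc (0:ℝ) T)) := by
      refine integral_congr_ae (Filter.Eventually.of_forall fun a => ?_)
      exact real_inner_self_eq_norm_sq _
    have h4 := (hbounds k).2
    rw [intervalIntegral.integral_of_le hT.le] at h4
    rw [h1, h2, h3]
    exact h4
  have hDknorm : ∀ k, ‖Dk k‖ ≤ Real.sqrt R2 := by
    intro k
    have := hDksq k
    calc ‖Dk k‖ = Real.sqrt (‖Dk k‖^2) := (Real.sqrt_sq (norm_nonneg _)).symm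
      _ ≤ Real.sqrt R2 := Real.sqrt_le_sqrt this
  obtain ⟨z, ψs, hψmono, hweak⟩ := weak_seq_compact Dk (Real.sqrt R2) hDknorm
  have hz : MemLp (⇑z) 2 (volume.restrict (Ioc (0:ℝ) T)) := Lp.memLp z
  set φL : ℝ → EuclideanSpace ℝ (Fin n) :=
    fun t => x₁ + ∫ s in (0:ℝ)..t, (⇑z : ℝ → EuclideanSpace ℝ (Fin n)) s with hphiL
  have hphiL0 : φL 0 = x₁ := by simp [hphiL]
  have hH1L : IsH1Path T φL ⇑z := by
    refine ⟨hz, fun t ht => ?_⟩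
    rw [hphiL0]
  -- pointwise convergence of the minimizing subsequence
  have hpt : ∀ t ∈ Icc (0:ℝ) T, Tendsto (fun j => (p (ψs j)).1 t) atTop (𝓝 (φL t)) := by
    intro t ht
    apply tendsto_of_inner_tendsto
    intro c
    have hYmem : MemLp ((Ioc (0:ℝ) t).indicator (fun _ => c)) 2
        (volume.restrict (Ioc (0:ℝ) T)) := (memLp_const c).indicator measurableSet_Ioc
    have hform : ∀ j, ⟪(p j).1 t, c⟫ = ⟪x₁, c⟫ + ⟪Dk j, hYmem.toLp _⟫ := by
      intro j
      rw [inner_test hT.le ((hadm j).1.1) ht c]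
      have hphit : (p j).1 t = x₁ + ∫ s in (0:ℝ)..t, (p j).2 s := by
        rw [← (hadm j).2.1]; exact ((hadm j).1.2 t ht)
      rw [hphit, inner_add_left]
    have hform2 : ⟪φL t, c⟫ = ⟪x₁, c⟫ + ⟪z, hYmem.toLp _⟫ := by
      have h1 : ⟪z, hYmem.toLp _⟫
          = ⟪∫ s in (0:ℝ)..t, (⇑z : ℝ → EuclideanSpace ℝ (Fin n)) s, c⟫ := by
        conv_lhs => rw [← Lp.toLp_coeFn z hz]
        exact inner_test hT.le hz ht c
      rw [hphiL]
      rw [inner_add_left, h1]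
    have h3 : Tendsto (fun j => ⟪x₁, c⟫ + ⟪Dk (ψs j), hYmem.toLp _⟫) atTop
        (𝓝 (⟪x₁, c⟫ + ⟪z, hYmem.toLp _⟫)) := tendsto_const_nhds.add (hweak _)
    rw [hform2]
    exact h3.congr (fun j => (hform (ψs j)).symm)
  have hphiLT : φL T = x₂ := by
    have h1 := hpt T ⟨hT.le, le_refl T⟩
    have h2 : Tendsto (fun j => (p (ψs j)).1 T) atTop (𝓝 x₂) :=
      tendsto_const_nhds.congr (fun j => ((hadm (ψs j)).2.2).symm)
    exact (tendsto_nhds_unique h1 h2).symm ▸ tendsto_nhds_unique h1 h2 ▸ rfl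
  have hadmL : Adm T x₁ x₂ φL ⇑z := ⟨hH1L, hphiL0, hphiLT⟩
  -- lower semicontinuity
  have hphiLcont := h1path_continuousOn hT.le hH1L
  have hbphiLmem : MemLp (fun s => b (φL s)) 2 (volume.restrict (Ioc (0:ℝ) T)) :=
    continuousOn_memℒp (hb.continuous.comp_continuousOn hphiLcont)
  set w : ℝ → EuclideanSpace ℝ (Fin n) := fun s => z s - b (φL s) with hw
  have hwmem : MemLp w 2 (volume.restrict (Ioc (0:ℝ) T)) := hz.sub hbphiLmem
  set Q : ℝ := ∫ a, ‖w a‖^2 ∂(volume.restrict (Ioc (0:ℝ) T)) with hQ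
  have hbmem : ∀ k, MemLp (fun s => b ((p k).1 s)) 2 (volume.restrict (Ioc (0:ℝ) T)) :=
    fun k => continuousOn_memℒp (hb.continuous.comp_continuousOn
      (h1path_continuousOn hT.le (hadm k).1))
  have hineq : ∀ j, (∫ a, ⟪(p j).2 a, w a⟫ ∂(volume.restrict (Ioc (0:ℝ) T))) * 2
      - (∫ a, ⟪b ((p j).1 a), w a⟫ ∂(volume.restrict (Ioc (0:ℝ) T))) * 2 - Q
      ≤ 2*(m + 1/(j+1)) := by
    intro j
    set y : ℝ → EuclideanSpace ℝ (Fin n) := fun s => (p j).2 s - b ((p j).1 s) with hy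
    have hymem : MemLp y 2 (volume.restrict (Ioc (0:ℝ) T)) := (hadm j).1.1.sub (hbmem j)
    have hint_yw : Integrable (fun a => ⟪y a, w a⟫) (volume.restrict (Ioc (0:ℝ) T)) :=
      integrable_inner_of_mem hymem hwmem
    have hint_w2 : Integrable (fun a => ‖w a‖^2) (volume.restrict (Ioc (0:ℝ) T)) :=
      sq_norm_integrable hwmem
    have hint_y2 : Integrable (fun a => ‖y a‖^2) (volume.restrict (Ioc (0:ℝ) T)) :=
      sq_norm_integrable hymem
    have hmono : (∫ a, (2*⟪y a, w a⟫ - ‖w a‖^2) ∂(volume.restrict (Ioc (0:ℝ) T)))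
        ≤ ∫ a, ‖y a‖^2 ∂(volume.restrict (Ioc (0:ℝ) T)) := by
      refine integral_mono ((hint_yw.const_mul 2).sub hint_w2) hint_y2 (fun a => ?_)
      have h5 := norm_sub_sq_real (y a) (w a)
      have h6 := sq_nonneg (‖y a - w a‖)
      simp only
      nlinarith
    rw [MeasureTheory.integral_sub (hint_yw.const_mul 2) hint_w2,
      MeasureTheory.integral_const_mul] at hmono
    have hsplit : (∫ a, ⟪y a, w a⟫ ∂(volume.restrict (Ioc (0:ℝ) T)))
        = (∫ a, ⟪(p j).2 a, w a⟫ ∂(volume.restrict (Ioc (0:ℝ) T)))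
          - ∫ a, ⟪b ((p j).1 a), w a⟫ ∂(volume.restrict (Ioc (0:ℝ) T)) := by
      rw [← MeasureTheory.integral_sub (integrable_inner_of_mem (hadm j).1.1 hwmem)
        (integrable_inner_of_mem (hbmem j) hwmem)]
      refine integral_congr_ae (Filter.Eventually.of_forall fun a => ?_)
      simp only [hy]
      rw [inner_sub_left]
    have hR : (∫ a, ‖y a‖^2 ∂(volume.restrict (Ioc (0:ℝ) T))) ≤ 2*(m + 1/(j+1)) := by
      have h1 := hact j
      unfold action at h1
      rw [intervalIntegral.integral_of_le hT.le] at h1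
      have h2 : (∫ a, ‖y a‖^2 ∂(volume.restrict (Ioc (0:ℝ) T)))
          = ∫ t in Ioc (0:ℝ) T, ‖(p j).2 t - b ((p j).1 t)‖^2 := rfl
      rw [h2]
      linarith
    rw [hsplit] at hmono
    rw [hQ]
    linarith
  -- pass to the limit
  have h1lim : Tendsto (fun j => ∫ a, ⟪(p (ψs j)).2 a, w a⟫ ∂(volume.restrict (Ioc (0:ℝ) T)))
      atTop (𝓝 (∫ a, ⟪z a, w a⟫ ∂(volume.restrict (Ioc (0:ℝ) T)))) := by
    have h1 := hweak (hwmem.toLp w)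
    have h2 : ∀ j, ⟪Dk (ψs j), hwmem.toLp w⟫
        = ∫ a, ⟪(p (ψs j)).2 a, w a⟫ ∂(volume.restrict (Ioc (0:ℝ) T)) :=
      fun j => inner_toLp_eq _ _
    have h3 : ⟪z, hwmem.toLp w⟫ = ∫ a, ⟪z a, w a⟫ ∂(volume.restrict (Ioc (0:ℝ) T)) := by
      conv_lhs => rw [← Lp.toLp_coeFn z hz]
      exact inner_toLp_eq _ _
    rw [← h3]
    exact h1.congr (fun j => h2 j)
  have h2lim : Tendsto (fun j => ∫ a, ⟪b ((p (ψs j)).1 a), w a⟫ ∂(volume.restrict (Ioc (0:ℝ) T)))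
      atTop (𝓝 (∫ a, ⟪b (φL a), w a⟫ ∂(volume.restrict (Ioc (0:ℝ) T)))) := by
    refine tendsto_integral_of_dominated_convergence (bound := fun a => (B + K * U) * ‖w a‖)
      (fun j => ((hbmem (ψs j)).1.inner hwmem.1)) ?_ ?_ ?_
    · exact (hwmem.integrable one_le_two).norm.const_mul _
    · intro j
      filter_upwards [ae_restrict_mem measurableSet_Ioc] with a ha
      have haI : a ∈ Icc (0:ℝ) T := Ioc_subset_Icc_self ha
      have h5 : ‖⟪b ((p (ψs j)).1 a), w a⟫‖ ≤ ‖b ((p (ψs j)).1 a)‖ * ‖w a‖ := by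
        rw [Real.norm_eq_abs]; exact abs_real_inner_le_norm _ _
      have h6 : ‖b ((p (ψs j)).1 a)‖ ≤ B + (K:ℝ) * ‖(p (ψs j)).1 a - x₁‖ := lip_norm_le hb x₁ _
      have h7 : (K:ℝ) * ‖(p (ψs j)).1 a - x₁‖ ≤ (K:ℝ) * U :=
        mul_le_mul_of_nonneg_left ((hbounds (ψs j)).1 a haI) K.2
      have h8 : ‖b ((p (ψs j)).1 a)‖ * ‖w a‖ ≤ (B + (K:ℝ) * U) * ‖w a‖ := by
        apply mul_le_mul_of_nonneg_right _ (norm_nonneg _)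
        linarith
      exact h5.trans h8
    · filter_upwards [ae_restrict_mem measurableSet_Ioc] with a ha
      have haI : a ∈ Icc (0:ℝ) T := Ioc_subset_Icc_self ha
      exact ((hb.continuous.tendsto _).comp (hpt a haI)).inner tendsto_const_nhds
  have hzw : (∫ a, ⟪z a, w a⟫ ∂(volume.restrict (Ioc (0:ℝ) T)))
      - (∫ a, ⟪b (φL a), w a⟫ ∂(volume.restrict (Ioc (0:ℝ) T))) = Q := by
    rw [← MeasureTheory.integral_sub (integrable_inner_of_mem hz hwmem)
      (integrable_inner_of_mem hbphiLmem hwmem)]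
    refine integral_congr_ae (Filter.Eventually.of_forall fun a => ?_)
    beta_reduce
    rw [← inner_sub_left]
    exact real_inner_self_eq_norm_sq _
  have hRlim : Tendsto (fun j : ℕ => 2*(m + 1/((ψs j : ℝ)+1))) atTop (𝓝 (2*m)) := by
    have h1 : Tendsto (fun j : ℕ => 1/((ψs j : ℝ)+1)) atTop (𝓝 0) :=
      tendsto_one_div_add_atTop_nhds_zero_nat.comp hψmono.tendsto_atTop
    have h2 : Tendsto (fun j : ℕ => m + 1/((ψs j : ℝ)+1)) atTop (𝓝 (m + 0)) :=
      tendsto_const_nhds.add h1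
    rw [add_zero] at h2
    exact h2.const_mul 2
  have hLlim : Tendsto (fun j =>
      (∫ a, ⟪(p (ψs j)).2 a, w a⟫ ∂(volume.restrict (Ioc (0:ℝ) T))) * 2
      - (∫ a, ⟪b ((p (ψs j)).1 a), w a⟫ ∂(volume.restrict (Ioc (0:ℝ) T))) * 2 - Q)
      atTop (𝓝 Q) := by
    have h1 := ((h1lim.mul_const 2).sub (h2lim.mul_const 2)).sub_const Q
    have h2 : (∫ a, ⟪z a, w a⟫ ∂(volume.restrict (Ioc (0:ℝ) T))) * 2
        - (∫ a, ⟪b (φL a), w a⟫ ∂(volume.restrict (Ioc (0:ℝ) T))) * 2 - Q = Q := by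
      linarith [hzw]
    rwa [h2] at h1
  have hQle : Q ≤ 2*m :=
    le_of_tendsto_of_tendsto' hLlim hRlim (fun j => hineq (ψs j))
  refine ⟨φL, ⇑z, hadmL, fun ψf dψ hA => ?_⟩
  have hfin : action b T φL ⇑z ≤ m := by
    unfold action
    rw [intervalIntegral.integral_of_le hT.le]
    have h2 : (∫ t in Ioc (0:ℝ) T, ‖z t - b (φL t)‖^2) = Q := rfl
    rw [h2]
    linarith
  exact hfin.trans (hm_le ψf dψ hA)
end
end

section
/- Let b : ℝⁿ → ℝⁿ be globally Lipschitz with constant K and fix T > 0. Then there exist constants C₁, C₂ > 0 depending only on K and T such that for every φ ∈ H¹([0,T]; ℝⁿ) with φ(0) = 0, ‖φ'‖²_{L²(0,T)} ≤ C₁ |b(0)|² + 2 C₂ S_T(φ); equivalently, S_T(φ) ≥ (1/(2C₂)) ‖φ'‖²_{L²(0,T)} − (C₁/(2C₂)) |b(0)|², so S_T is coercive on paths starting at the origin. -/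
open MeasureTheory Filter intervalIntegral
open scoped RealInnerProductSpace Topology

noncomputable section

-- helper: L² function has integrable squared norm
lemma memL2_int_sq {α : Type*} [MeasurableSpace α] {μ : Measure α}
    {E : Type*} [NormedAddCommGroup E] {f : α → E} (h : MemLp f 2 μ) :
    Integrable (fun x => ‖f x‖^2) μ := by
  have h2 := h.integrable_norm_rpow two_ne_zero ENNReal.ofNat_ne_top
  refine h2.congr (ae_of_all _ fun x => ?_)
  show ‖f x‖ ^ (ENNReal.toReal 2) = ‖f x‖ ^ 2
  rw [show ENNReal.toReal 2 = ((2:ℕ):ℝ) by norm_num, Real.rpow_natCast]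

set_option maxHeartbeats 2000000 in
/-- coercivity of `S_T` on paths starting at the origin: there are
constants `C₁, C₂ > 0` depending only on the Lipschitz constant `K` and on `T` such that
`‖φ'‖²_{L²} ≤ C₁‖b(0)‖² + 2C₂ S_T(φ)`, i.e. `S_T(φ) ≥ ‖φ'‖²/(2C₂) − C₁‖b(0)‖²/(2C₂)`. -/
theorem stmt6 {n : ℕ} (K : NNReal) (T : ℝ) (hT : 0 < T) :
    ∃ C₁ C₂ : ℝ, 0 < C₁ ∧ 0 < C₂ ∧
      ∀ b : EuclideanSpace ℝ (Fin n) → EuclideanSpace ℝ (Fin n), LipschitzWith K b →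
        ∀ φ dφ : ℝ → EuclideanSpace ℝ (Fin n), IsH1Path T φ dφ → φ 0 = 0 →
          (∫ t in (0:ℝ)..T, ‖dφ t‖^2) ≤ C₁ * ‖b 0‖^2 + 2 * C₂ * action b T φ dφ ∧
          (1/(2*C₂)) * (∫ t in (0:ℝ)..T, ‖dφ t‖^2) - (C₁/(2*C₂)) * ‖b 0‖^2
            ≤ action b T φ dφ := by
  set K' : ℝ := (K : ℝ) with hK'def
  have hK0 : (0:ℝ) ≤ K' := K.coe_nonneg
  set B : ℝ := 4 * (K'^2 + 1) * T with hBdef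
  have hB : 0 < B := by positivity
  refine ⟨4 * T * Real.exp (B * T), 2 * Real.exp (B * T), by positivity, by positivity, ?_⟩
  intro b hb φ dφ hH1 hφ0
  obtain ⟨hd, hprim⟩ := hH1
  haveI : IsFiniteMeasure (volume.restrict (Set.Ioc (0:ℝ) T)) :=
    ⟨by rw [Measure.restrict_apply_univ]; simp [Real.volume_Ioc]⟩
  have hIoc_sub : Set.Ioc (0:ℝ) T ⊆ Set.Icc 0 T := Set.Ioc_subset_Icc_self
  -- integrabilities
  have hInt1T : IntegrableOn dφ (Set.Ioc (0:ℝ) T) := hd.integrable (by norm_num)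
  have hInt2T : IntegrableOn (fun t => ‖dφ t‖^2) (Set.Ioc (0:ℝ) T) := memL2_int_sq hd
  -- φ is the primitive
  have hφeq : ∀ t ∈ Set.Icc (0:ℝ) T, φ t = ∫ s in (0:ℝ)..t, dφ s := by
    intro t ht; rw [hprim t ht, hφ0, zero_add]
  have hφcont : ContinuousOn φ (Set.Icc (0:ℝ) T) := by
    have hint : IntegrableOn dφ (Set.uIcc (0:ℝ) T) := by
      rw [Set.uIcc_of_le hT.le]
      exact (integrableOn_Icc_iff_integrableOn_Ioc).2 hInt1T
    have hc := intervalIntegral.continuousOn_primitive_interval hint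
    rw [Set.uIcc_of_le hT.le] at hc
    exact hc.congr hφeq
  have hbφcont : ContinuousOn (fun t => b (φ t)) (Set.Icc (0:ℝ) T) :=
    hb.continuous.comp_continuousOn hφcont
  have hbφL2 : MemLp (fun t => b (φ t)) 2 (volume.restrict (Set.Ioc (0:ℝ) T)) := by
    obtain ⟨M, hM⟩ := isCompact_Icc.exists_bound_of_continuousOn hbφcont
    refine MemLp.of_bound ((hbφcont.mono hIoc_sub).aestronglyMeasurable measurableSet_Ioc) M ?_
    filter_upwards [ae_restrict_mem measurableSet_Ioc] with t ht using hM t (hIoc_sub ht)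
  have hIntb2 : IntegrableOn (fun t => ‖b (φ t)‖^2) (Set.Ioc (0:ℝ) T) := memL2_int_sq hbφL2
  have hIntd2 : IntegrableOn (fun t => ‖dφ t - b (φ t)‖^2) (Set.Ioc (0:ℝ) T) :=
    memL2_int_sq (hd.sub hbφL2)
  -- F and its properties
  set F : ℝ → ℝ := fun t => ∫ s in Set.Ioc (0:ℝ) t, ‖dφ s‖^2 with hFdef
  have hFnonneg : ∀ t, 0 ≤ F t := fun t =>
    setIntegral_nonneg measurableSet_Ioc (fun s _ => sq_nonneg _)
  have hFcont : ContinuousOn F (Set.Icc (0:ℝ) T) :=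
    intervalIntegral.continuousOn_primitive ((integrableOn_Icc_iff_integrableOn_Ioc).2 hInt2T)
  have hFix : ∀ t, 0 ≤ t → F t = ∫ s in (0:ℝ)..t, ‖dφ s‖^2 := fun t ht =>
    (intervalIntegral.integral_of_le ht).symm
  -- pointwise bound on ‖φ t‖² via Cauchy–Schwarz
  have hφbd : ∀ t ∈ Set.Icc (0:ℝ) T, ‖φ t‖^2 ≤ T * F t := by
    intro t ht
    have h1 : ‖φ t‖ ≤ ∫ s in Set.Ioc (0:ℝ) t, ‖dφ s‖ := by
      rw [hφeq t ht, ← intervalIntegral.integral_of_le ht.1]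
      exact intervalIntegral.norm_integral_le_integral_norm ht.1
    have hmono : MemLp dφ 2 (volume.restrict (Set.Ioc (0:ℝ) t)) :=
      hd.mono_measure (Measure.restrict_mono (Set.Ioc_subset_Ioc_right ht.2) le_rfl)
    have hof : ENNReal.ofReal 2 = 2 := by norm_num
    have hf2 : MemLp (fun s => ‖dφ s‖) (ENNReal.ofReal 2)
        (volume.restrict (Set.Ioc (0:ℝ) t)) := by rw [hof]; exact hmono.norm
    have hg2 : MemLp (fun _ : ℝ => (1:ℝ)) (ENNReal.ofReal 2)
        (volume.restrict (Set.Ioc (0:ℝ) t)) := memLp_const 1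
    have hcs := integral_mul_le_Lp_mul_Lq_of_nonneg
      Real.HolderConjugate.two_two
      (ae_of_all _ fun s => norm_nonneg (dφ s)) (ae_of_all _ fun _ => zero_le_one) hf2 hg2
    simp only [mul_one, Real.one_rpow] at hcs
    have hvol : ∫ _s in Set.Ioc (0:ℝ) t, (1:ℝ) = t := by
      simp [Real.volume_Ioc, ENNReal.toReal_ofReal ht.1, ht.1]
    have hpow : (∫ s in Set.Ioc (0:ℝ) t, ‖dφ s‖ ^ (2:ℝ)) = F t := by
      rw [hFdef]
      refine setIntegral_congr_fun measurableSet_Ioc (fun s _ => ?_)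
      rw [show (2:ℝ) = ((2:ℕ):ℝ) by norm_num, Real.rpow_natCast]
    rw [hvol, hpow] at hcs
    have hsq1 : (F t) ^ ((1:ℝ)/2) = Real.sqrt (F t) := (Real.sqrt_eq_rpow _).symm
    have hsq2 : t ^ ((1:ℝ)/2) = Real.sqrt t := (Real.sqrt_eq_rpow _).symm
    rw [show (1:ℝ)/(2:ℝ) = 1/2 by norm_num] at hcs
    rw [hsq1, hsq2] at hcs
    have e1 := Real.sq_sqrt (hFnonneg t)
    have e2 := Real.sq_sqrt ht.1
    nlinarith [h1, hcs, Real.sqrt_nonneg (F t), Real.sqrt_nonneg t,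
      norm_nonneg (φ t), ht.2, hFnonneg t, hT.le,
      mul_le_mul_of_nonneg_left ht.2 (hFnonneg t)]
  -- G
  set G : ℝ → ℝ := fun u => ∫ s in (0:ℝ)..u, F s with hGdef
  have hGnonneg : ∀ u ∈ Set.Icc (0:ℝ) T, 0 ≤ G u := fun u hu =>
    intervalIntegral.integral_nonneg hu.1 (fun s _ => hFnonneg s)
  have hGcont : ContinuousOn G (Set.Icc (0:ℝ) T) := by
    have hint : IntegrableOn F (Set.uIcc (0:ℝ) T) := by
      rw [Set.uIcc_of_le hT.le]
      exact hFcont.integrableOn_Icc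
    simpa [Set.uIcc_of_le hT.le] using intervalIntegral.continuousOn_primitive_interval hint
  set S : ℝ := action b T φ dφ with hSdef
  have hSnn : (0:ℝ) ≤ S := by
    rw [hSdef]
    unfold action
    have : (0:ℝ) ≤ ∫ t in (0:ℝ)..T, ‖dφ t - b (φ t)‖^2 :=
      intervalIntegral.integral_nonneg hT.le (fun s _ => sq_nonneg _)
    linarith
  have h2S : ∫ s in Set.Ioc (0:ℝ) T, ‖dφ s - b (φ s)‖^2 = 2 * S := by
    rw [hSdef]; unfold action
    rw [intervalIntegral.integral_of_le hT.le]; ring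
  set A : ℝ := 4 * S + 4 * T * ‖b 0‖^2 with hAdef
  have hAnn : 0 ≤ A := by positivity
  -- key integral inequality
  have key : ∀ τ ∈ Set.Icc (0:ℝ) T, F τ ≤ A + B * G τ := by
    intro τ hτ
    have hsub : Set.Ioc (0:ℝ) τ ⊆ Set.Ioc 0 T := Set.Ioc_subset_Ioc_right hτ.2
    have hFint : IntegrableOn F (Set.Ioc (0:ℝ) τ) :=
      ((hFcont.mono (Set.Icc_subset_Icc le_rfl hτ.2)).integrableOn_Icc).mono_set
        Set.Ioc_subset_Icc_self
    have hI1 : IntegrableOn (fun t => 2*‖dφ t - b (φ t)‖^2) (Set.Ioc (0:ℝ) τ) :=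
      (hIntd2.mono_set hsub).const_mul 2
    have hI2 : IntegrableOn (fun t => 4*K'^2*T*F t) (Set.Ioc (0:ℝ) τ) :=
      hFint.const_mul _
    have hpt : ∀ t ∈ Set.Ioc (0:ℝ) τ,
        ‖dφ t‖^2 ≤ 2*‖dφ t - b (φ t)‖^2 + (4*‖b 0‖^2 + 4*K'^2*T*F t) := by
      intro t ht
      have htT : t ∈ Set.Icc (0:ℝ) T := ⟨ht.1.le, ht.2.trans hτ.2⟩
      have hL : ‖b (φ t) - b 0‖ ≤ K' * ‖φ t‖ := by
        have := hb.dist_le_mul (φ t) 0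
        rw [dist_eq_norm, dist_eq_norm, sub_zero] at this
        exact this
      have h1 : ‖b (φ t)‖ ≤ ‖b 0‖ + K' * ‖φ t‖ := by
        have h := norm_sub_norm_le (b (φ t)) (b 0)
        linarith
      have h2 : ‖dφ t‖ ≤ ‖dφ t - b (φ t)‖ + ‖b (φ t)‖ := by
        calc ‖dφ t‖ = ‖(dφ t - b (φ t)) + b (φ t)‖ := by rw [sub_add_cancel]
        _ ≤ _ := norm_add_le _ _
      have h3 : ‖φ t‖^2 ≤ T * F t := hφbd t htT
      nlinarith [norm_nonneg (dφ t - b (φ t)), norm_nonneg (b (φ t)),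
        norm_nonneg (dφ t), norm_nonneg (φ t), norm_nonneg (b 0), hK0,
        hFnonneg t, hT.le, sq_nonneg (‖b 0‖ - K' * ‖φ t‖),
        sq_nonneg (‖dφ t - b (φ t)‖ - ‖b (φ t)‖),
        mul_nonneg hK0 (norm_nonneg (φ t))]
    have hmono := setIntegral_mono_on
      (f := fun t => ‖dφ t‖^2)
      (g := fun t => 2*‖dφ t - b (φ t)‖^2 + (4*‖b 0‖^2 + 4*K'^2*T*F t))
      (hInt2T.mono_set hsub)
      (by exact hI1.add ((integrable_const _).add hI2)) measurableSet_Ioc hpt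
    have e1 : (∫ t in Set.Ioc (0:ℝ) τ, (2*‖dφ t - b (φ t)‖^2 + (4*‖b 0‖^2 + 4*K'^2*T*F t)))
        = (∫ t in Set.Ioc (0:ℝ) τ, 2*‖dφ t - b (φ t)‖^2)
          + ∫ t in Set.Ioc (0:ℝ) τ, (4*‖b 0‖^2 + 4*K'^2*T*F t) :=
      integral_add hI1 ((integrable_const _).add hI2)
    have e2 : (∫ t in Set.Ioc (0:ℝ) τ, (4*‖b 0‖^2 + 4*K'^2*T*F t))
        = (∫ _t in Set.Ioc (0:ℝ) τ, 4*‖b 0‖^2)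
          + ∫ t in Set.Ioc (0:ℝ) τ, 4*K'^2*T*F t :=
      integral_add (integrable_const _) hI2
    have e3 : (∫ t in Set.Ioc (0:ℝ) τ, 2*‖dφ t - b (φ t)‖^2)
        = 2 * ∫ t in Set.Ioc (0:ℝ) τ, ‖dφ t - b (φ t)‖^2 := MeasureTheory.integral_const_mul _ _
    have e4 : (∫ t in Set.Ioc (0:ℝ) τ, 4*K'^2*T*F t)
        = 4*K'^2*T * ∫ s in Set.Ioc (0:ℝ) τ, F s := MeasureTheory.integral_const_mul _ _
    have e5 : (∫ _t in Set.Ioc (0:ℝ) τ, 4*‖b 0‖^2) = τ * (4*‖b 0‖^2) := by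
      rw [setIntegral_const, measureReal_def, Real.volume_Ioc, sub_zero, ENNReal.toReal_ofReal hτ.1,
        smul_eq_mul]
    rw [e1, e2, e3, e4, e5] at hmono
    have hGτ : G τ = ∫ s in Set.Ioc (0:ℝ) τ, F s := by
      rw [hGdef]; exact intervalIntegral.integral_of_le hτ.1
    have hd2 : (∫ t in Set.Ioc (0:ℝ) τ, ‖dφ t - b (φ t)‖^2) ≤ 2 * S := by
      rw [← h2S]
      exact setIntegral_mono_set hIntd2 (ae_of_all _ fun s => sq_nonneg _)
        (HasSubset.Subset.eventuallyLE hsub)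
    have hGnn := hGnonneg τ hτ
    have hconst : τ * (4*‖b 0‖^2) ≤ T * (4*‖b 0‖^2) := by
      have : (0:ℝ) ≤ 4*‖b 0‖^2 := by positivity
      exact mul_le_mul_of_nonneg_right hτ.2 this
    rw [← hGτ] at hmono
    have hBG : 4*K'^2*T * G τ ≤ B * G τ := by
      rw [hBdef]; nlinarith [hGnn, hT.le]
    calc F τ ≤ 2 * (∫ t in Set.Ioc (0:ℝ) τ, ‖dφ t - b (φ t)‖^2)
        + (τ * (4*‖b 0‖^2) + 4*K'^2*T * G τ) := hmono
    _ ≤ 2 * (2*S) + (T * (4*‖b 0‖^2) + B * G τ) := by linarith [hd2, hconst, hBG]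
    _ = A + B * G τ := by rw [hAdef]; ring
  -- Grönwall
  have hG' : ∀ x ∈ Set.Ico (0:ℝ) T, HasDerivWithinAt G (F x) (Set.Ici x) x := by
    intro x hx
    have hmem : Set.Icc (0:ℝ) T ∈ 𝓝[Set.Ioi x] x := by
      rw [mem_nhdsWithin]
      exact ⟨Set.Iio T, isOpen_Iio, hx.2,
        fun y hy => ⟨hx.1.trans hy.2.le, hy.1.le⟩⟩
    have hint : IntervalIntegrable F volume 0 x := by
      have hc : ContinuousOn F (Set.uIcc (0:ℝ) x) := by
        rw [Set.uIcc_of_le hx.1]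
        exact hFcont.mono (Set.Icc_subset_Icc le_rfl hx.2.le)
      exact hc.intervalIntegrable
    exact intervalIntegral.integral_hasDerivWithinAt_right (t := Set.Ioi x) hint
      ⟨Set.Icc 0 T, hmem, hFcont.aestronglyMeasurable measurableSet_Icc⟩
      ((hFcont x ⟨hx.1, hx.2.le⟩).mono_of_mem_nhdsWithin hmem)
  have hbound : ∀ x ∈ Set.Ico (0:ℝ) T, ‖F x‖ ≤ B * ‖G x‖ + A := by
    intro x hx
    rw [Real.norm_of_nonneg (hFnonneg x),
      Real.norm_of_nonneg (hGnonneg x ⟨hx.1, hx.2.le⟩)]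
    linarith [key x ⟨hx.1, hx.2.le⟩]
  have hgron := norm_le_gronwallBound_of_norm_deriv_right_le hGcont hG'
    (by simp [hGdef] : ‖G 0‖ ≤ 0) hbound T ⟨hT.le, le_refl T⟩
  rw [gronwallBound_of_K_ne_0 hB.ne'] at hgron
  have hGT : G T ≤ A / B * (Real.exp (B * T) - 1) := by
    have := (Real.norm_of_nonneg (hGnonneg T ⟨hT.le, le_refl T⟩)) ▸ hgron
    simpa using this
  have hFT : F T ≤ A * Real.exp (B * T) := by
    have h1 := key T ⟨hT.le, le_refl T⟩
    have h2 : B * G T ≤ B * (A / B * (Real.exp (B * T) - 1)) :=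
      mul_le_mul_of_nonneg_left hGT hB.le
    calc F T ≤ A + B * G T := h1
    _ ≤ A + B * (A / B * (Real.exp (B * T) - 1)) := by linarith [h2]
    _ = A * Real.exp (B * T) := by
        rw [show B * (A / B * (Real.exp (B * T) - 1))
            = (A / B * B) * (Real.exp (B * T) - 1) by ring,
          div_mul_cancel₀ A hB.ne']
        ring
  have hmain : (∫ t in (0:ℝ)..T, ‖dφ t‖^2) ≤
      4 * T * Real.exp (B * T) * ‖b 0‖^2 + 2 * (2 * Real.exp (B * T)) * S := by
    rw [← hFix T hT.le]
    calc F T ≤ A * Real.exp (B * T) := hFT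
    _ = 4 * T * Real.exp (B * T) * ‖b 0‖^2 + 2 * (2 * Real.exp (B * T)) * S := by
        rw [hAdef]; ring
  refine ⟨hmain, ?_⟩
  have hC₂ : (0:ℝ) < 2 * (2 * Real.exp (B * T)) := by positivity
  rw [show (1/(2*(2 * Real.exp (B * T)))) * (∫ t in (0:ℝ)..T, ‖dφ t‖^2)
      - (4 * T * Real.exp (B * T)/(2*(2 * Real.exp (B * T)))) * ‖b 0‖^2
      = ((∫ t in (0:ℝ)..T, ‖dφ t‖^2) - 4 * T * Real.exp (B * T) * ‖b 0‖^2)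
        / (2*(2 * Real.exp (B * T))) by ring, div_le_iff₀ hC₂]
  rw [← hSdef] at *
  nlinarith [hmain]
end
end

section
/- Let b : ℝⁿ → ℝⁿ be globally Lipschitz and T > 0. For every φ ∈ H¹([0,T]; ℝⁿ) and every sequence {φ_h} ⊂ H¹([0,T]; ℝⁿ) converging weakly to φ in H¹([0,T]; ℝⁿ), the lim-inf inequality S_T(φ) ≤ liminf_{h→0} S_T(φ_h) holds; i.e. S_T is sequentially weakly lower semicontinuous on H¹([0,T]; ℝⁿ). -/
open MeasureTheory Filter intervalIntegral
open scoped RealInnerProductSpace Topology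
open scoped ENNReal

noncomputable section

variable {n : ℕ}
local notation "E" => EuclideanSpace ℝ (Fin n)

lemma toLp_norm_sq {μ : Measure ℝ} (g : ℝ → E) (hg : MemLp g 2 μ) :
    ‖hg.toLp g‖ ^ 2 = ∫ t, ‖g t‖ ^ 2 ∂μ := by
  rw [← real_inner_self_eq_norm_sq, L2.inner_def]
  refine integral_congr_ae ?_
  filter_upwards [hg.coeFn_toLp] with t ht
  rw [ht, real_inner_self_eq_norm_sq]

lemma aux_inner_setIntegral {T : ℝ} (hT : 0 ≤ T) {s : Set ℝ} (hs : MeasurableSet s)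
    (hss : s ⊆ Set.Ioc 0 T) (g : ℝ → E)
    (hg : MemLp g 2 (volume.restrict (Set.Ioc (0:ℝ) T))) (c : E) :
    (∫ t in s, ⟪c, g t⟫ ∂(volume.restrict (Set.Ioc (0:ℝ) T)))
      = ⟪(indicatorConstLp 2 hs (by
          rw [Measure.restrict_apply hs, Set.inter_eq_self_of_subset_left hss]
          exact (measure_mono hss |>.trans_lt measure_Ioc_lt_top).ne) c : Lp E 2 _), hg.toLp g⟫ := by
  rw [L2.inner_indicatorConstLp_eq_setIntegral_inner]
  refine (integral_congr_ae ?_)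
  filter_upwards [ae_restrict_of_ae hg.coeFn_toLp] with t ht
  rw [ht]

lemma measure_toReal_rpow_le {T : ℝ} (hT : 0 ≤ T) {s : Set ℝ} (hs : MeasurableSet s)
    (hss : s ⊆ Set.Ioc 0 T) :
    (((volume.restrict (Set.Ioc (0:ℝ) T)) s).toReal) ^ (1/2 : ℝ) ≤ Real.sqrt T := by
  rw [Measure.restrict_apply hs, Set.inter_eq_self_of_subset_left hss, Real.sqrt_eq_rpow]
  refine Real.rpow_le_rpow ENNReal.toReal_nonneg ?_ (by norm_num)
  have h1 : volume s ≤ ENNReal.ofReal T := by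
    refine (measure_mono hss).trans ?_
    rw [Real.volume_Ioc, sub_zero]
  calc (volume s).toReal ≤ (ENNReal.ofReal T).toReal :=
        ENNReal.toReal_mono ENNReal.ofReal_ne_top h1
    _ = T := ENNReal.toReal_ofReal hT

lemma aux_abs_inner_le {T : ℝ} (hT : 0 ≤ T) {s : Set ℝ} (hs : MeasurableSet s)
    (hss : s ⊆ Set.Ioc 0 T) (g : ℝ → E)
    (hg : MemLp g 2 (volume.restrict (Set.Ioc (0:ℝ) T))) (c : E) :
    |∫ t in s, ⟪c, g t⟫ ∂(volume.restrict (Set.Ioc (0:ℝ) T))|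
      ≤ ‖c‖ * Real.sqrt T * ‖hg.toLp g‖ := by
  rw [aux_inner_setIntegral hT hs hss g hg c]
  refine (abs_real_inner_le_norm _ _).trans ?_
  rw [norm_indicatorConstLp two_ne_zero ENNReal.ofNat_ne_top]
  have h2 : (1 / (2:ℝ≥0∞).toReal) = (1/2:ℝ) := by norm_num
  rw [h2]
  gcongr
  exact measure_toReal_rpow_le hT hs hss

lemma aux_norm_setIntegral {T : ℝ} (hT : 0 ≤ T) {s : Set ℝ} (hs : MeasurableSet s)
    (hss : s ⊆ Set.Ioc 0 T) (g : ℝ → E)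
    (hg : MemLp g 2 (volume.restrict (Set.Ioc (0:ℝ) T))) :
    ‖∫ t in s, g t ∂(volume.restrict (Set.Ioc (0:ℝ) T))‖ ≤ Real.sqrt T * ‖hg.toLp g‖ := by
  set μ := volume.restrict (Set.Ioc (0:ℝ) T)
  haveI : IsFiniteMeasure μ := ⟨by
    rw [Measure.restrict_apply_univ]; exact measure_Ioc_lt_top⟩
  set v := ∫ t in s, g t ∂μ with hv
  have hint : Integrable g (μ.restrict s) :=
    ((hg.integrable one_le_two).restrict (s := s))
  have h1 : ‖v‖ ^ 2 = ∫ t in s, ⟪v, g t⟫ ∂μ := by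
    rw [← real_inner_self_eq_norm_sq, hv, ← integral_inner hint]
  have h2 : ‖v‖ ^ 2 ≤ ‖v‖ * Real.sqrt T * ‖hg.toLp g‖ := by
    rw [h1]
    exact (le_abs_self _).trans (aux_abs_inner_le hT hs hss g hg v)
  rcases eq_or_lt_of_le (norm_nonneg v) with h | h
  · rw [← h]; positivity
  · nlinarith [h2]

lemma tendsto_of_forall_inner {v : ℕ → E} {w : E}
    (h : ∀ c : E, Tendsto (fun k => (⟪v k, c⟫ : ℝ)) atTop (𝓝 ⟪w, c⟫)) :
    Tendsto v atTop (𝓝 w) := by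
  have heq : ∀ x : E, x = (EuclideanSpace.equiv (Fin n) ℝ).symm ((EuclideanSpace.equiv (Fin n) ℝ) x) := by
    intro x; simp
  have h2 : Tendsto (fun k => (EuclideanSpace.equiv (Fin n) ℝ) (v k)) atTop
      (𝓝 ((EuclideanSpace.equiv (Fin n) ℝ) w)) := by
    rw [tendsto_pi_nhds]
    intro i
    have := h (EuclideanSpace.single i (1:ℝ))
    simpa [EuclideanSpace.inner_single_right] using this
  have := ((EuclideanSpace.equiv (Fin n) ℝ).symm.continuous.tendsto _).comp h2
  simpa [Function.comp_def] using this

lemma primitive_continuousOn {T : ℝ} (g : ℝ → E)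
    (hg : MemLp g 2 (volume.restrict (Set.Ioc (0:ℝ) T))) :
    ContinuousOn (fun t => ∫ s in (0:ℝ)..t, g s) (Set.Icc 0 T) := by
  haveI : IsFiniteMeasure (volume.restrict (Set.Ioc (0:ℝ) T)) :=
    ⟨by rw [Measure.restrict_apply_univ]; exact measure_Ioc_lt_top⟩
  have hint : IntegrableOn g (Set.Icc 0 T) volume := by
    rw [integrableOn_Icc_iff_integrableOn_Ioc]
    exact hg.integrable one_le_two
  have := intervalIntegral.continuousOn_primitive (f := g) (μ := volume) (a := 0) (b := T) hint
  refine this.congr fun t ht => ?_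
  rw [integral_of_le ht.1]

lemma h1path_mean {T : ℝ} (hT : 0 < T) (ψ dψ : ℝ → E) (hψ : IsH1Path T ψ dψ) (c : E) :
    ∫ t in Set.Ioc 0 T, ⟪ψ t, c⟫ ∂volume
      = T * ⟪ψ 0, c⟫ + ∫ t in Set.Ioc 0 T, ⟪∫ s in (0:ℝ)..t, dψ s, c⟫ ∂volume := by
  have hcont : ContinuousOn (fun t => (⟪∫ s in (0:ℝ)..t, dψ s, c⟫ : ℝ)) (Set.Icc 0 T) :=
    (primitive_continuousOn dψ hψ.1).inner continuousOn_const
  have hint2 : IntegrableOn (fun t => (⟪∫ s in (0:ℝ)..t, dψ s, c⟫ : ℝ)) (Set.Ioc 0 T) volume :=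
    (hcont.integrableOn_Icc).mono_set Set.Ioc_subset_Icc_self
  have h1 : Set.EqOn (fun t => (⟪ψ t, c⟫ : ℝ))
      (fun t => (⟪ψ 0, c⟫ : ℝ) + ⟪∫ s in (0:ℝ)..t, dψ s, c⟫) (Set.Ioc 0 T) := by
    intro t ht
    simp only
    rw [hψ.2 t (Set.Ioc_subset_Icc_self ht), inner_add_left]
  rw [setIntegral_congr_fun measurableSet_Ioc h1,
    integral_add (integrableOn_const measure_Ioc_lt_top.ne).integrable hint2.integrable,
    setIntegral_const, smul_eq_mul, measureReal_def, Real.volume_Ioc, sub_zero,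
    ENNReal.toReal_ofReal hT.le]


lemma setIntegral_Ioc_restrict {X : Type*} [NormedAddCommGroup X] [NormedSpace ℝ X]
    {T : ℝ} {s : Set ℝ} (hs : MeasurableSet s) (hss : s ⊆ Set.Ioc 0 T) (h : ℝ → X) :
    ∫ t in s, h t ∂(volume.restrict (Set.Ioc (0:ℝ) T)) = ∫ t in s, h t ∂volume := by
  rw [Measure.restrict_restrict hs, Set.inter_eq_self_of_subset_left hss]

set_option maxHeartbeats 1000000

/-- lim-inf inequality: `S_T` is sequentially weakly lower semicontinuous
on `H¹((0,T);ℝⁿ)`: if `φ_h ⇀ φ` weakly in `H¹`, then `S_T(φ) ≤ liminf S_T(φ_h)`. -/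
theorem stmt8 {n : ℕ} (b : EuclideanSpace ℝ (Fin n) → EuclideanSpace ℝ (Fin n))
    (K : NNReal) (hb : LipschitzWith K b)
    (T : ℝ) (hT : 0 < T)
    (φk dφk : ℕ → ℝ → EuclideanSpace ℝ (Fin n))
    (φ dφ : ℝ → EuclideanSpace ℝ (Fin n))
    (hk : ∀ k, IsH1Path T (φk k) (dφk k))
    (hφ : IsH1Path T φ dφ)
    (hweak : WeakH1Tendsto T φk dφk φ dφ) :
    action b T φ dφ ≤ Filter.liminf (fun k => action b T (φk k) (dφk k)) atTop := by
  classical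
  set μ := volume.restrict (Set.Ioc (0:ℝ) T) with hμdef
  haveI : IsFiniteMeasure μ := ⟨by rw [Measure.restrict_apply_univ]; exact measure_Ioc_lt_top⟩
  set Dk : ℕ → Lp (EuclideanSpace ℝ (Fin n)) 2 μ := fun k => ((hk k).1).toLp _ with hDkdef
  set D : Lp (EuclideanSpace ℝ (Fin n)) 2 μ := hφ.1.toLp _ with hDdef
  -- (1) weak L² convergence of the derivatives
  have key0 : ∀ (G : Lp (EuclideanSpace ℝ (Fin n)) 2 μ) (g : ℝ → EuclideanSpace ℝ (Fin n)) (hg : MemLp g 2 μ),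
      (∫ t in (0:ℝ)..T, (⟪g t, G t⟫ : ℝ)) = ⟪hg.toLp g, G⟫ := by
    intro G g hg
    rw [L2.inner_def, integral_of_le hT.le]
    refine (MeasureTheory.integral_congr_ae ?_).symm
    filter_upwards [hg.coeFn_toLp] with t ht
    rw [ht]
  have h1 : ∀ G : Lp (EuclideanSpace ℝ (Fin n)) 2 μ, Tendsto (fun k => (⟪Dk k, G⟫ : ℝ)) atTop (𝓝 ⟪D, G⟫) := by
    intro G
    have hG : MemLp (fun t => G t) 2 μ := by simpa using Lp.memLp G
    have h := hweak (fun _ => 0) (fun t => G t) (by simpa using (zero_memLp : MemLp (0 : ℝ → EuclideanSpace ℝ (Fin n)) 2 μ)) hG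
    simp only [inner_zero_right, intervalIntegral.integral_zero, zero_add] at h
    have e1 : (fun k => (⟪Dk k, G⟫ : ℝ)) = fun k => ∫ t in (0:ℝ)..T, (⟪dφk k t, G t⟫ : ℝ) :=
      funext fun k => (key0 G _ (hk k).1).symm
    have e2 : (⟪D, G⟫ : ℝ) = ∫ t in (0:ℝ)..T, (⟪dφ t, G t⟫ : ℝ) := (key0 G _ hφ.1).symm
    rw [e1, e2]
    exact h
  -- (2) uniform bound on the derivatives via Banach–Steinhaus
  obtain ⟨M0, hM0⟩ : ∃ C', ∀ k, ‖innerSL ℝ (Dk k)‖ ≤ C' := by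
    apply banach_steinhaus
    intro G
    obtain ⟨Cb, hCb⟩ := (h1 G).norm.bddAbove_range
    exact ⟨Cb, fun k => hCb ⟨k, rfl⟩⟩
  set M := max M0 0 with hMdef
  have hMnn : 0 ≤ M := le_max_right _ _
  have hDkM : ∀ k, ‖Dk k‖ ≤ M := fun k => by
    rw [← innerSL_apply_norm ℝ (Dk k)]
    exact (hM0 k).trans (le_max_left _ _)
  -- (3) convergence of set integrals against the derivatives
  have h3 : ∀ (s : Set ℝ) (hs : MeasurableSet s), s ⊆ Set.Ioc 0 T → ∀ c : EuclideanSpace ℝ (Fin n),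
      Tendsto (fun k => ∫ t in s, (⟪c, dφk k t⟫ : ℝ) ∂μ) atTop (𝓝 (∫ t in s, (⟪c, dφ t⟫ : ℝ) ∂μ)) := by
    intro s hs hss c
    have hμs : μ s ≠ ⊤ := by
      rw [Measure.restrict_apply hs, Set.inter_eq_self_of_subset_left hss]
      exact ((measure_mono hss).trans_lt measure_Ioc_lt_top).ne
    have e1 : (fun k => ∫ t in s, (⟪c, dφk k t⟫ : ℝ) ∂μ)
        = fun k => (⟪Dk k, indicatorConstLp 2 hs hμs c⟫ : ℝ) :=
      funext fun k => (aux_inner_setIntegral hT.le hs hss _ (hk k).1 c).trans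
        (real_inner_comm _ _)
    have e2 : (∫ t in s, (⟪c, dφ t⟫ : ℝ) ∂μ) = ⟪D, indicatorConstLp 2 hs hμs c⟫ :=
      (aux_inner_setIntegral hT.le hs hss _ hφ.1 c).trans (real_inner_comm _ _)
    rw [e1, e2]
    exact h1 _
  have hIocsub : ∀ t ∈ Set.Icc (0:ℝ) T, Set.Ioc (0:ℝ) t ⊆ Set.Ioc 0 T :=
    fun t ht => Set.Ioc_subset_Ioc_right ht.2
  -- (4) pointwise convergence of primitives
  have key4 : ∀ (g : ℝ → EuclideanSpace ℝ (Fin n)) (hg : MemLp g 2 μ) (c : EuclideanSpace ℝ (Fin n)),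
      ∀ t ∈ Set.Icc (0:ℝ) T,
      (⟪∫ s in (0:ℝ)..t, g s, c⟫ : ℝ) = ∫ s in Set.Ioc (0:ℝ) t, (⟪c, g s⟫ : ℝ) ∂μ := by
    intro g hg c t ht
    rw [real_inner_comm, integral_of_le ht.1,
      ← setIntegral_Ioc_restrict measurableSet_Ioc (hIocsub t ht) g,
      ← integral_inner ((hg.integrable one_le_two).restrict)]
  have h4 : ∀ t ∈ Set.Icc (0:ℝ) T,
      Tendsto (fun k => ∫ s in (0:ℝ)..t, dφk k s) atTop (𝓝 (∫ s in (0:ℝ)..t, dφ s)) := by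
    intro t ht
    apply tendsto_of_forall_inner
    intro c
    have e1 : (fun k => (⟪∫ s in (0:ℝ)..t, dφk k s, c⟫ : ℝ))
        = fun k => ∫ s in Set.Ioc (0:ℝ) t, (⟪c, dφk k s⟫ : ℝ) ∂μ :=
      funext fun k => key4 _ (hk k).1 c t ht
    rw [e1, key4 _ hφ.1 c t ht]
    exact h3 _ measurableSet_Ioc (hIocsub t ht) c
  -- norm bound for primitives
  have hnorm_prim : ∀ (g : ℝ → EuclideanSpace ℝ (Fin n)) (hg : MemLp g 2 μ), ∀ t ∈ Set.Icc (0:ℝ) T,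
      ‖∫ s in (0:ℝ)..t, g s‖ ≤ Real.sqrt T * ‖hg.toLp g‖ := by
    intro g hg t ht
    rw [integral_of_le ht.1, ← setIntegral_Ioc_restrict measurableSet_Ioc (hIocsub t ht) g]
    exact aux_norm_setIntegral hT.le measurableSet_Ioc (hIocsub t ht) g hg
  -- (5) convergence of the initial values
  have h5 : Tendsto (fun k => φk k 0) atTop (𝓝 (φ 0)) := by
    apply tendsto_of_forall_inner
    intro c
    have key : ∀ (ψ dψ : ℝ → EuclideanSpace ℝ (Fin n)), IsH1Path T ψ dψ → (⟪ψ 0, c⟫ : ℝ) =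
        ((∫ t in Set.Ioc (0:ℝ) T, (⟪ψ t, c⟫ : ℝ) ∂volume)
          - ∫ t in Set.Ioc (0:ℝ) T, (⟪∫ s in (0:ℝ)..t, dψ s, c⟫ : ℝ) ∂volume) / T := by
      intro ψ dψ hψ
      have h := h1path_mean hT ψ dψ hψ c
      rw [eq_div_iff (ne_of_gt hT)]
      linarith [h]
    have hA : Tendsto (fun k => ∫ t in Set.Ioc (0:ℝ) T, (⟪φk k t, c⟫ : ℝ) ∂volume) atTop
        (𝓝 (∫ t in Set.Ioc (0:ℝ) T, (⟪φ t, c⟫ : ℝ) ∂volume)) := by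
      have h := hweak (fun _ => c) (fun _ => 0) (memLp_const c)
        (by simpa using (zero_memLp : MemLp (0 : ℝ → EuclideanSpace ℝ (Fin n)) 2 μ))
      simp only [inner_zero_right, intervalIntegral.integral_zero, add_zero] at h
      have e : ∀ (ψ : ℝ → EuclideanSpace ℝ (Fin n)), (∫ t in (0:ℝ)..T, (⟪ψ t, c⟫ : ℝ))
          = ∫ t in Set.Ioc (0:ℝ) T, (⟪ψ t, c⟫ : ℝ) ∂volume := fun ψ => integral_of_le hT.le
      have e1 : (fun k => ∫ t in (0:ℝ)..T, (⟪φk k t, c⟫ : ℝ))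
          = fun k => ∫ t in Set.Ioc (0:ℝ) T, (⟪φk k t, c⟫ : ℝ) ∂volume := funext fun k => e _
      rw [e1, e φ] at h
      exact h
    have hB : Tendsto (fun k => ∫ t in Set.Ioc (0:ℝ) T, (⟪∫ s in (0:ℝ)..t, dφk k s, c⟫ : ℝ) ∂volume)
        atTop (𝓝 (∫ t in Set.Ioc (0:ℝ) T, (⟪∫ s in (0:ℝ)..t, dφ s, c⟫ : ℝ) ∂volume)) := by
      refine tendsto_integral_of_dominated_convergence (fun _ => Real.sqrt T * M * ‖c‖)
        ?_ (integrable_const _) ?_ ?_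
      · intro k
        have hcont : ContinuousOn (fun t => (⟪∫ s in (0:ℝ)..t, dφk k s, c⟫ : ℝ)) (Set.Icc 0 T) :=
          (primitive_continuousOn _ (hk k).1).inner continuousOn_const
        exact (hcont.mono Set.Ioc_subset_Icc_self).aestronglyMeasurable measurableSet_Ioc
      · intro k
        filter_upwards [ae_restrict_mem measurableSet_Ioc] with t ht
        have hb1 : ‖∫ s in (0:ℝ)..t, dφk k s‖ ≤ Real.sqrt T * M :=
          (hnorm_prim _ (hk k).1 t (Set.Ioc_subset_Icc_self ht)).trans
            (mul_le_mul_of_nonneg_left (hDkM k) (Real.sqrt_nonneg T))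
        calc ‖(⟪∫ s in (0:ℝ)..t, dφk k s, c⟫ : ℝ)‖
            ≤ ‖∫ s in (0:ℝ)..t, dφk k s‖ * ‖c‖ := by
              rw [Real.norm_eq_abs]; exact abs_real_inner_le_norm _ _
          _ ≤ Real.sqrt T * M * ‖c‖ := by gcongr
      · filter_upwards [ae_restrict_mem measurableSet_Ioc] with t ht
        exact ((h4 t (Set.Ioc_subset_Icc_self ht)).inner tendsto_const_nhds)
    have e1 : (fun k => (⟪φk k 0, c⟫ : ℝ)) = fun k =>
        ((∫ t in Set.Ioc (0:ℝ) T, (⟪φk k t, c⟫ : ℝ) ∂volume)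
          - ∫ t in Set.Ioc (0:ℝ) T, (⟪∫ s in (0:ℝ)..t, dφk k s, c⟫ : ℝ) ∂volume) / T :=
      funext fun k => key _ _ (hk k)
    rw [e1, key φ dφ hφ]
    exact (hA.sub hB).div_const T
  -- (6) pointwise convergence of the paths
  have h6 : ∀ t ∈ Set.Icc (0:ℝ) T, Tendsto (fun k => φk k t) atTop (𝓝 (φ t)) := by
    intro t ht
    have e : ∀ k, φk k t = φk k 0 + ∫ s in (0:ℝ)..t, dφk k s := fun k => (hk k).2 t ht
    simp only [e, hφ.2 t ht]
    exact h5.add (h4 t ht)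
  -- (7) uniform bound on the paths
  obtain ⟨C0, hC0⟩ := h5.norm.bddAbove_range
  have hC0nn : (0:ℝ) ≤ C0 := le_trans (norm_nonneg _) (hC0 ⟨0, rfl⟩)
  set C : ℝ := (C0 + Real.sqrt T * M) + (‖φ 0‖ + Real.sqrt T * ‖D‖) with hCdef
  have hCnn : 0 ≤ C := by positivity
  have h7 : ∀ k, ∀ t ∈ Set.Icc (0:ℝ) T, ‖φk k t‖ ≤ C := by
    intro k t ht
    rw [(hk k).2 t ht]
    have b1 : ‖φk k 0‖ ≤ C0 := hC0 ⟨k, rfl⟩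
    have b2 := hnorm_prim _ (hk k).1 t ht
    have b3 := hDkM k
    have b4 := Real.sqrt_nonneg T
    calc ‖φk k 0 + ∫ s in (0:ℝ)..t, dφk k s‖
        ≤ ‖φk k 0‖ + ‖∫ s in (0:ℝ)..t, dφk k s‖ := norm_add_le _ _
      _ ≤ C := by
          rw [hCdef]
          have : Real.sqrt T * ‖Dk k‖ ≤ Real.sqrt T * M :=
            mul_le_mul_of_nonneg_left (hDkM k) (Real.sqrt_nonneg T)
          have b5 : 0 ≤ ‖φ 0‖ + Real.sqrt T * ‖D‖ := by positivity
          linarith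
  have h7' : ∀ t ∈ Set.Icc (0:ℝ) T, ‖φ t‖ ≤ C := by
    intro t ht
    rw [hφ.2 t ht]
    have b2 := hnorm_prim _ hφ.1 t ht
    have b4 := Real.sqrt_nonneg T
    calc ‖φ 0 + ∫ s in (0:ℝ)..t, dφ s‖ ≤ ‖φ 0‖ + ‖∫ s in (0:ℝ)..t, dφ s‖ := norm_add_le _ _
      _ ≤ C := by
          rw [hCdef]
          have b5 : 0 ≤ C0 + Real.sqrt T * M := by positivity
          linarith
  -- measurability of the paths
  have haem : ∀ (ψ dψ : ℝ → EuclideanSpace ℝ (Fin n)), IsH1Path T ψ dψ → AEStronglyMeasurable ψ μ := by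
    intro ψ dψ hψ
    have hcont : ContinuousOn (fun t => ψ 0 + ∫ s in (0:ℝ)..t, dψ s) (Set.Icc 0 T) :=
      continuousOn_const.add (primitive_continuousOn _ hψ.1)
    refine ((hcont.mono Set.Ioc_subset_Icc_self).aestronglyMeasurable measurableSet_Ioc).congr ?_
    filter_upwards [ae_restrict_mem measurableSet_Ioc] with t ht
    exact (hψ.2 t (Set.Ioc_subset_Icc_self ht)).symm
  -- bound for b along the paths
  have hbC : ∀ x : EuclideanSpace ℝ (Fin n), ‖x‖ ≤ C → ‖b x‖ ≤ ‖b 0‖ + K * C := by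
    intro x hx
    have h1' := hb.dist_le_mul x 0
    rw [dist_eq_norm, dist_eq_norm, sub_zero] at h1'
    have h2' : (K : ℝ) * ‖x‖ ≤ K * C := mul_le_mul_of_nonneg_left hx K.coe_nonneg
    calc ‖b x‖ = ‖b 0 + (b x - b 0)‖ := by
          congr 1
          abel
      _ ≤ ‖b 0‖ + ‖b x - b 0‖ := norm_add_le _ _
      _ ≤ ‖b 0‖ + K * C := by linarith
  -- (9) MemLp of b along the paths
  have h9 : ∀ (ψ dψ : ℝ → EuclideanSpace ℝ (Fin n)), IsH1Path T ψ dψ → (∀ t ∈ Set.Icc (0:ℝ) T, ‖ψ t‖ ≤ C) →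
      MemLp (fun t => b (ψ t)) 2 μ := by
    intro ψ dψ hψ hbd
    refine MemLp.of_bound (hb.continuous.comp_aestronglyMeasurable (haem ψ dψ hψ))
      (‖b 0‖ + K * C) ?_
    filter_upwards [ae_restrict_mem measurableSet_Ioc] with t ht
    exact hbC _ (hbd t (Set.Ioc_subset_Icc_self ht))
  have hBk : ∀ k, MemLp (fun t => b (φk k t)) 2 μ := fun k => h9 _ _ (hk k) (h7 k)
  have hBφ : MemLp (fun t => b (φ t)) 2 μ := h9 _ _ hφ h7'
  -- (8) strong L² convergence of b along the paths
  have h8 : Tendsto (fun k => ∫ t, ‖b (φk k t) - b (φ t)‖ ^ 2 ∂μ) atTop (𝓝 0) := by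
    have h0 : (0:ℝ) = ∫ (_ : ℝ), (0:ℝ) ∂μ := by simp
    rw [h0]
    refine tendsto_integral_of_dominated_convergence (fun _ => ((K:ℝ) * (2 * C)) ^ 2)
      ?_ (integrable_const _) ?_ ?_
    · intro k
      have ham : AEStronglyMeasurable (fun t => b (φk k t) - b (φ t)) μ :=
        (hb.continuous.comp_aestronglyMeasurable (haem _ _ (hk k))).sub
          (hb.continuous.comp_aestronglyMeasurable (haem _ _ hφ))
      exact (continuous_pow 2).comp_aestronglyMeasurable ham.norm
    · intro k
      filter_upwards [ae_restrict_mem measurableSet_Ioc] with t ht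
      have h1' := hb.dist_le_mul (φk k t) (φ t)
      rw [dist_eq_norm, dist_eq_norm] at h1'
      have h2' : ‖φk k t - φ t‖ ≤ 2 * C := (norm_sub_le _ _).trans
        (by linarith [h7 k t (Set.Ioc_subset_Icc_self ht), h7' t (Set.Ioc_subset_Icc_self ht)])
      have h3' : ‖b (φk k t) - b (φ t)‖ ≤ (K:ℝ) * (2 * C) :=
        h1'.trans (mul_le_mul_of_nonneg_left h2' K.coe_nonneg)
      rw [Real.norm_eq_abs, abs_of_nonneg (by positivity)]
      exact pow_le_pow_left₀ (norm_nonneg _) h3' 2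
    · filter_upwards [ae_restrict_mem measurableSet_Ioc] with t ht
      have hcont : Continuous fun x : EuclideanSpace ℝ (Fin n) => ‖b x - b (φ t)‖ ^ 2 :=
        ((hb.continuous.sub continuous_const).norm.pow 2)
      have := (hcont.tendsto (φ t)).comp (h6 t (Set.Ioc_subset_Icc_self ht))
      simpa [Function.comp_def] using this
  -- the L² elements for the action integrands
  have hfk : ∀ k, MemLp (fun t => dφk k t - b (φk k t)) 2 μ := fun k => ((hk k).1.sub (hBk k))
  have hf : MemLp (fun t => dφ t - b (φ t)) 2 μ := hφ.1.sub hBφ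
  set F : Lp (EuclideanSpace ℝ (Fin n)) 2 μ := hf.toLp _ with hFdef
  have hFkdecomp : ∀ k, (hfk k).toLp _ = Dk k - (hBk k).toLp _ := fun k =>
    MemLp.toLp_sub (hk k).1 (hBk k)
  have hFdecomp : F = D - hBφ.toLp _ := MemLp.toLp_sub hφ.1 hBφ
  -- (12) writing the action as the L² norm
  have h12 : ∀ (ψ dψ : ℝ → EuclideanSpace ℝ (Fin n)) (h' : MemLp (fun t => dψ t - b (ψ t)) 2 μ),
      action b T ψ dψ = 1/2 * ‖h'.toLp _‖ ^ 2 := by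
    intro ψ dψ h'
    rw [action, toLp_norm_sq, integral_of_le hT.le]
  -- strong L² convergence of Bk to B
  have hnormsq : ∀ k, ‖(hBk k).toLp _ - hBφ.toLp _‖ ^ 2 = ∫ t, ‖b (φk k t) - b (φ t)‖ ^ 2 ∂μ := by
    intro k
    rw [← MemLp.toLp_sub (hBk k) hBφ, toLp_norm_sq]
    refine integral_congr_ae (Eventually.of_forall fun t => ?_)
    simp [Pi.sub_apply]
  have hBtend : Tendsto (fun k => ‖(hBk k).toLp _ - hBφ.toLp _‖) atTop (𝓝 0) := by
    have e : (fun k => ‖(hBk k).toLp _ - hBφ.toLp _‖)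
        = fun k => Real.sqrt (∫ t, ‖b (φk k t) - b (φ t)‖ ^ 2 ∂μ) :=
      funext fun k => by rw [← hnormsq k, Real.sqrt_sq (norm_nonneg _)]
    rw [e]
    have := (Real.continuous_sqrt.tendsto 0).comp h8
    simpa [Function.comp_def] using this
  -- convergence of the inner products ⟪Fk, F⟫ → ‖F‖²
  have hFF : Tendsto (fun k => (⟪(hfk k).toLp _, F⟫ : ℝ)) atTop (𝓝 (‖F‖ ^ 2)) := by
    have e : (fun k => (⟪(hfk k).toLp _, F⟫ : ℝ))
        = fun k => (⟪Dk k, F⟫ : ℝ) - ⟪(hBk k).toLp _, F⟫ :=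
      funext fun k => by rw [hFkdecomp k, inner_sub_left]
    rw [e]
    have hA := h1 F
    have hB2 : Tendsto (fun k => (⟪(hBk k).toLp _, F⟫ : ℝ)) atTop (𝓝 ⟪hBφ.toLp _, F⟫) := by
      have hdiff : Tendsto (fun k => (⟪(hBk k).toLp _ - hBφ.toLp _, F⟫ : ℝ)) atTop (𝓝 0) := by
        refine squeeze_zero_norm (fun k => ?_) (by simpa using hBtend.mul_const ‖F‖)
        rw [Real.norm_eq_abs]
        exact abs_real_inner_le_norm _ _
      have e2 : (fun k => (⟪(hBk k).toLp _, F⟫ : ℝ))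
          = fun k => (⟪hBφ.toLp _, F⟫ : ℝ) + ⟪(hBk k).toLp _ - hBφ.toLp _, F⟫ :=
        funext fun k => by rw [inner_sub_left]; ring
      rw [e2]
      simpa using (tendsto_const_nhds.add hdiff)
    have hcomb := hA.sub hB2
    have e3 : (⟪D, F⟫ : ℝ) - ⟪hBφ.toLp _, F⟫ = ‖F‖ ^ 2 := by
      rw [← inner_sub_left, ← hFdecomp, real_inner_self_eq_norm_sq]
    rwa [e3] at hcomb
  -- (13) uniform bound on ‖Fk‖
  set Bc : ℝ := Real.sqrt ((‖b 0‖ + K * C) ^ 2 * T) with hBcdef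
  have hBknorm : ∀ k, ‖(hBk k).toLp _‖ ≤ Bc := by
    intro k
    rw [← Real.sqrt_sq (norm_nonneg ((hBk k).toLp _)), hBcdef]
    apply Real.sqrt_le_sqrt
    rw [toLp_norm_sq]
    have hle : ∀ᵐ t ∂μ, ‖b (φk k t)‖ ^ 2 ≤ (‖b 0‖ + K * C) ^ 2 := by
      filter_upwards [ae_restrict_mem measurableSet_Ioc] with t ht
      have := hbC _ (h7 k t (Set.Ioc_subset_Icc_self ht))
      have hnn : (0:ℝ) ≤ ‖b 0‖ + K * C := le_trans (norm_nonneg _) this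
      exact pow_le_pow_left₀ (norm_nonneg _) this 2
    calc ∫ t, ‖b (φk k t)‖ ^ 2 ∂μ ≤ ∫ _, (‖b 0‖ + K * C) ^ 2 ∂μ :=
          integral_mono_of_nonneg (Eventually.of_forall fun t => by positivity)
            (integrable_const _) hle
      _ ≤ (‖b 0‖ + K * C) ^ 2 * T := by
          rw [MeasureTheory.integral_const, smul_eq_mul, hμdef, measureReal_def, Measure.restrict_apply_univ, Real.volume_Ioc,
            sub_zero, ENNReal.toReal_ofReal hT.le, mul_comm]
  have hBcnn : 0 ≤ Bc := Real.sqrt_nonneg _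
  have hFknorm : ∀ k, ‖(hfk k).toLp _‖ ≤ M + Bc := by
    intro k
    rw [hFkdecomp k]
    exact (norm_sub_le _ _).trans (add_le_add (hDkM k) (hBknorm k))
  -- final liminf argument
  have hact : (fun k => action b T (φk k) (dφk k)) = fun k => 1/2 * ‖(hfk k).toLp _‖ ^ 2 :=
    funext fun k => h12 _ _ (hfk k)
  have hactφ : action b T φ dφ = 1/2 * ‖F‖ ^ 2 := h12 _ _ hf
  rw [hact, hactφ]
  have hcb : IsCoboundedUnder (· ≥ ·) atTop (fun k => 1/2 * ‖(hfk k).toLp _‖ ^ 2) := by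
    refine isCoboundedUnder_ge_of_le atTop (x := 1/2 * (M + Bc) ^ 2) fun k => ?_
    have h1' := hFknorm k
    have h2' := norm_nonneg ((hfk k).toLp _)
    nlinarith
  refine le_of_forall_pos_le_add fun ε hε => ?_
  have hev : ∀ᶠ k in atTop, 1/2 * ‖F‖ ^ 2 - ε ≤ 1/2 * ‖(hfk k).toLp _‖ ^ 2 := by
    have h' : ∀ᶠ k in atTop, ‖F‖ ^ 2 - ε ≤ ⟪(hfk k).toLp _, F⟫ :=
      hFF.eventually (eventually_ge_nhds (by linarith))
    filter_upwards [h'] with k hk'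
    have hcs : (⟪(hfk k).toLp _, F⟫ : ℝ) ≤ ‖(hfk k).toLp _‖ * ‖F‖ := real_inner_le_norm _ _
    nlinarith [sq_nonneg (‖(hfk k).toLp _‖ - ‖F‖)]
  have hfin := le_liminf_of_le hcb hev
  linarith
end
end

section
/- Let b : ℝⁿ → ℝⁿ be globally Lipschitz with constant K, fix x₁ = 0 and x₂ = x ∈ ℝⁿ with x ≠ 0, and let C_p be the Poincaré constant of the interval (0,1). Then there exists a constant C_T̂ > 0, depending only on |x|, K, C_p and ‖b(φ_L)‖_{L²(0,1)} where φ_L(s) = xs, such that T̂(φ̄) ≥ C_T̂ for every φ̄ ∈ A₁; one may take C_T̂ = min{ |x| / (√2 ‖b(φ_L)‖_{L²(0,1)}), 1/(√2 K C_p) }. -/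
open MeasureTheory Filter intervalIntegral
open scoped RealInnerProductSpace Topology

noncomputable section

private lemma my_le_of_sq_le_sq {a b : ℝ} (hb : 0 ≤ b) (h : a*a ≤ b*b) : a ≤ b := by
  nlinarith [sq_nonneg (a-b), sq_nonneg (a+b)]

set_option maxHeartbeats 2000000 in
/-- Property 3.4: a uniform positive lower bound for `T̂` on `A₁` (with
`x₁ = 0`, `x₂ = x ≠ 0`): `T̂(φ̄) ≥ C_T̂ := min{‖x‖/(√2‖b(φ_L)‖_{L²}), 1/(√2 K C_p)}`,
where `φ_L(s) = sx` and `C_p` is the Poincaré constant of `(0,1)` (for `H₀¹` functions);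
`T̂` is interpreted as `+∞` when its denominator `‖b(φ̄)‖_{L²}` vanishes. -/
theorem stmt11 {n : ℕ} (b : EuclideanSpace ℝ (Fin n) → EuclideanSpace ℝ (Fin n))
    (K : NNReal) (hb : LipschitzWith K b) (hK : 0 < (K:ℝ))
    (x : EuclideanSpace ℝ (Fin n)) (hx : x ≠ 0)
    (Cp : ℝ) (hCp : 0 < Cp)
    -- `C_p` is a Poincaré constant for `H₀¹((0,1))` functions
    (hPoin : ∀ u du : ℝ → EuclideanSpace ℝ (Fin n), IsH1Path 1 u du →
      u 0 = 0 → u 1 = 0 →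
      (∫ s in (0:ℝ)..1, ‖u s‖^2) ≤ Cp^2 * ∫ s in (0:ℝ)..1, ‖du s‖^2) :
    ∀ φ dφ : ℝ → EuclideanSpace ℝ (Fin n), Adm 1 (0 : EuclideanSpace ℝ (Fin n)) x φ dφ →
      L2norm 1 (fun s => b (φ s)) = 0 ∨
      min (‖x‖ / (Real.sqrt 2 * L2norm 1 (fun s => b (s • x))))
          (1 / (Real.sqrt 2 * (K:ℝ) * Cp))
        ≤ That b φ dφ := by
  intro φ dφ hadm
  by_cases hb0 : L2norm 1 (fun s => b (φ s)) = 0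
  · exact Or.inl hb0
  right
  obtain ⟨⟨hmem, hprim⟩, h0, h1⟩ := hadm
  have hfin : IsFiniteMeasure (volume.restrict (Set.Ioc (0:ℝ) 1)) := by
    constructor
    simp [Measure.restrict_apply_univ, Real.volume_Ioc]
  have hIntOn : IntegrableOn dφ (Set.Ioc (0:ℝ) 1) volume := hmem.integrable (by norm_num)
  have hIIt : ∀ t ∈ Set.Icc (0:ℝ) 1, IntervalIntegrable dφ volume 0 t := fun t ht =>
    (intervalIntegrable_iff_integrableOn_Ioc_of_le ht.1).2
      (hIntOn.mono_set (Set.Ioc_subset_Ioc_right ht.2))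
  have hII : IntervalIntegrable dφ volume 0 1 :=
    hIIt 1 (by norm_num)
  have hintdφ : (∫ s in (0:ℝ)..1, dφ s) = x := by
    have := hprim 1 (by norm_num)
    rw [h0, zero_add] at this
    rw [← this, h1]
  set u : ℝ → EuclideanSpace ℝ (Fin n) := fun t => φ t - t • x with hu
  set du : ℝ → EuclideanSpace ℝ (Fin n) := fun s => dφ s - x with hdu
  have hconst : MemLp (fun _ : ℝ => x) 2 (volume.restrict (Set.Ioc (0:ℝ) 1)) := memLp_const x
  have hH1u : IsH1Path 1 u du := by
    refine ⟨hmem.sub hconst, ?_⟩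
    intro t ht
    have hi : (∫ s in (0:ℝ)..t, du s) = (∫ s in (0:ℝ)..t, dφ s) - t • x := by
      rw [intervalIntegral.integral_sub (hIIt t ht) intervalIntegrable_const,
        intervalIntegral.integral_const]
      simp
    simp only [hu, hdu] at hi ⊢
    rw [hi, hprim t ht, h0]
    simp
  have hu0 : u 0 = 0 := by simp [hu, h0]
  have hu1 : u 1 = 0 := by simp [hu, h1]
  have hP := hPoin u du hH1u hu0 hu1
  -- square-integrability facts
  have hsq : IntervalIntegrable (fun s => ‖dφ s‖^2) volume 0 1 := by
    have h2 := hmem.integrable_norm_rpow (by norm_num) (by norm_num)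
    rw [intervalIntegrable_iff_integrableOn_Ioc_of_le (by norm_num)]
    refine h2.congr (Filter.Eventually.of_forall fun s => ?_)
    beta_reduce
    rw [← Real.rpow_natCast ‖dφ s‖ 2]
    norm_num
  have hinner : IntervalIntegrable (fun s => (⟪dφ s, x⟫ : ℝ)) volume 0 1 := by
    rw [intervalIntegrable_iff_integrableOn_Ioc_of_le (by norm_num)]
    exact hIntOn.inner_const x
  have hdu_sq : (∫ s in (0:ℝ)..1, ‖du s‖^2)
      = (∫ s in (0:ℝ)..1, ‖dφ s‖^2) - ‖x‖^2 := by
    have e1 : ∀ s : ℝ, ‖du s‖^2 = ‖dφ s‖^2 - 2*(⟪dφ s, x⟫ : ℝ) + ‖x‖^2 := by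
      intro s
      simp only [hdu]
      rw [norm_sub_sq_real]
    have hinx : (∫ s in (0:ℝ)..1, (⟪dφ s, x⟫ : ℝ)) = ‖x‖^2 := by
      have : ∀ s : ℝ, (⟪dφ s, x⟫ : ℝ) = ⟪x, dφ s⟫ := fun s => real_inner_comm _ _
      rw [intervalIntegral.integral_congr (fun s _ => this s),
        intervalIntegral.integral_of_le (by norm_num : (0:ℝ) ≤ 1),
        integral_inner hIntOn x, ← intervalIntegral.integral_of_le (by norm_num : (0:ℝ) ≤ 1),
        hintdφ, real_inner_self_eq_norm_sq]
    rw [intervalIntegral.integral_congr (fun s _ => e1 s)]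
    rw [intervalIntegral.integral_add (IntervalIntegrable.sub hsq (hinner.const_mul 2))
      intervalIntegrable_const,
      intervalIntegral.integral_sub hsq (hinner.const_mul 2),
      intervalIntegral.integral_const_mul, hinx, intervalIntegral.integral_const]
    simp
    ring
  -- continuity of φ on [0,1]
  have hIccInt : IntegrableOn dφ (Set.uIcc (0:ℝ) 1) volume := by
    rw [Set.uIcc_of_le (by norm_num : (0:ℝ) ≤ 1)]
    rwa [integrableOn_Icc_iff_integrableOn_Ioc]
  have hφcont : ContinuousOn φ (Set.Icc (0:ℝ) 1) := by
    have hψ : ContinuousOn (fun t => φ 0 + ∫ s in (0:ℝ)..t, dφ s) (Set.Icc (0:ℝ) 1) := by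
      have := continuousOn_primitive_interval (a := (0:ℝ)) (b := (1:ℝ)) hIccInt
      rw [Set.uIcc_of_le (by norm_num : (0:ℝ) ≤ 1)] at this
      exact continuousOn_const.add this
    exact hψ.congr (fun t ht => hprim t ht)
  have hucont : ContinuousOn u (Set.Icc (0:ℝ) 1) :=
    hφcont.sub ((continuous_id.smul continuous_const).continuousOn)
  have huint : IntervalIntegrable (fun s => ‖u s‖^2) volume 0 1 := by
    apply ContinuousOn.intervalIntegrable
    rw [Set.uIcc_of_le (by norm_num : (0:ℝ) ≤ 1)]
    exact (hucont.norm).pow 2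
  have hbφint : IntervalIntegrable (fun s => ‖b (φ s)‖^2) volume 0 1 := by
    apply ContinuousOn.intervalIntegrable
    rw [Set.uIcc_of_le (by norm_num : (0:ℝ) ≤ 1)]
    exact ((hb.continuous.comp_continuousOn hφcont).norm).pow 2
  have hbLint : IntervalIntegrable (fun s => ‖b (s • x)‖^2) volume 0 1 := by
    apply Continuous.intervalIntegrable
    exact ((hb.continuous.comp (continuous_id.smul continuous_const)).norm).pow 2
  -- pointwise Lipschitz bound
  have hpt : ∀ s : ℝ, ‖b (φ s)‖^2 ≤ 2*(K:ℝ)^2*‖u s‖^2 + 2*‖b (s • x)‖^2 := by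
    intro s
    have h1 : ‖b (φ s) - b (s • x)‖ ≤ (K:ℝ) * ‖φ s - s • x‖ := by
      have := hb.dist_le_mul (φ s) (s • x)
      rwa [dist_eq_norm, dist_eq_norm] at this
    have h2 : ‖b (φ s)‖ ≤ ‖b (φ s) - b (s • x)‖ + ‖b (s • x)‖ := by
      have := norm_add_le (b (φ s) - b (s • x)) (b (s • x))
      simpa using this
    have h3 : ‖b (φ s)‖ ≤ (K:ℝ)*‖u s‖ + ‖b (s • x)‖ := by
      simp only [hu]
      linarith
    nlinarith [norm_nonneg (b (φ s)), norm_nonneg (u s), norm_nonneg (b (s • x)),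
      hK.le, sq_nonneg ((K:ℝ)*‖u s‖ - ‖b (s • x)‖)]
  set Id := (∫ s in (0:ℝ)..1, ‖dφ s‖^2) with hId
  set Iu := (∫ s in (0:ℝ)..1, ‖u s‖^2) with hIu
  set Ib := (∫ s in (0:ℝ)..1, ‖b (φ s)‖^2) with hIb
  set IL := (∫ s in (0:ℝ)..1, ‖b (s • x)‖^2) with hIL
  have hkey : Ib ≤ 2*(K:ℝ)^2*Iu + 2*IL := by
    have := intervalIntegral.integral_mono_on (by norm_num : (0:ℝ) ≤ 1) hbφint
      ((huint.const_mul (2*(K:ℝ)^2)).add (hbLint.const_mul 2)) (fun s _ => hpt s)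
    rwa [intervalIntegral.integral_add (huint.const_mul (2*(K:ℝ)^2)) (hbLint.const_mul 2),
      intervalIntegral.integral_const_mul, intervalIntegral.integral_const_mul] at this
  have hdu_nonneg : (0:ℝ) ≤ ∫ s in (0:ℝ)..1, ‖du s‖^2 :=
    intervalIntegral.integral_nonneg (by norm_num) (fun s _ => sq_nonneg _)
  have hXle : ‖x‖^2 ≤ Id := by rw [hdu_sq] at hdu_nonneg; linarith
  have hIu_nonneg : (0:ℝ) ≤ Iu :=
    intervalIntegral.integral_nonneg (by norm_num) (fun s _ => sq_nonneg _)
  have hIL_nonneg : (0:ℝ) ≤ IL :=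
    intervalIntegral.integral_nonneg (by norm_num) (fun s _ => sq_nonneg _)
  have hIb_nonneg : (0:ℝ) ≤ Ib :=
    intervalIntegral.integral_nonneg (by norm_num) (fun s _ => sq_nonneg _)
  have hId_nonneg : (0:ℝ) ≤ Id :=
    intervalIntegral.integral_nonneg (by norm_num) (fun s _ => sq_nonneg _)
  have hxn : (0:ℝ) < ‖x‖ := norm_pos_iff.2 hx
  have hIb_pos : (0:ℝ) < Ib := by
    rcases hIb_nonneg.lt_or_eq with h | h
    · exact h
    · exfalso
      apply hb0
      simp only [L2norm, ← hIb, ← h, Real.sqrt_zero]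
  rw [hdu_sq] at hP
  -- final arithmetic
  simp only [That, L2norm, ← hIb, ← hId, ← hIL]
  clear_value Id Iu Ib IL
  have hKey2 : Ib ≤ 2*(K:ℝ)^2*Cp^2*(Id - ‖x‖^2) + 2*IL := by
    have h4 : 2*(K:ℝ)^2*Iu ≤ 2*(K:ℝ)^2*(Cp^2*(Id - ‖x‖^2)) :=
      mul_le_mul_of_nonneg_left hP (by positivity)
    nlinarith [h4, hkey]
  rcases hIL_nonneg.lt_or_eq with hILpos | hIL0
  swap
  · refine le_trans (min_le_left _ _) ?_
    rw [← hIL0, Real.sqrt_zero, mul_zero, div_zero]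
    positivity
  have s2 : Real.sqrt 2 * Real.sqrt 2 = 2 := Real.mul_self_sqrt (by norm_num)
  have sIb : Real.sqrt Ib * Real.sqrt Ib = Ib := Real.mul_self_sqrt hIb_nonneg
  have sId : Real.sqrt Id * Real.sqrt Id = Id := Real.mul_self_sqrt hId_nonneg
  have sIL : Real.sqrt IL * Real.sqrt IL = IL := Real.mul_self_sqrt hIL_nonneg
  have sIbpos : 0 < Real.sqrt Ib := Real.sqrt_pos.2 hIb_pos
  have s2pos : (0:ℝ) < Real.sqrt 2 := Real.sqrt_pos.2 (by norm_num)
  have sIdnn : 0 ≤ Real.sqrt Id := Real.sqrt_nonneg _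
  have sILpos : 0 < Real.sqrt IL := Real.sqrt_pos.2 hILpos
  by_cases hcase : Ib ≤ 2*((K:ℝ)*Cp)^2*Id
  · refine le_trans (min_le_right _ _) ?_
    rw [div_le_div_iff₀ (by positivity) sIbpos]
    have : Real.sqrt Ib ≤ Real.sqrt Id * (Real.sqrt 2 * (K:ℝ) * Cp) := by
      apply my_le_of_sq_le_sq (by positivity)
      have e0 : Real.sqrt Id * (Real.sqrt 2 * (K:ℝ) * Cp) * (Real.sqrt Id * (Real.sqrt 2 * (K:ℝ) * Cp)) = Id * (2*((K:ℝ)*Cp)^2) := by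
        linear_combination (Real.sqrt 2*(K:ℝ)*Cp)^2 * sId + (Id*(K:ℝ)^2*Cp^2) * s2
      rw [sIb, e0]
      nlinarith [hcase]
    linarith
  · push_neg at hcase
    refine le_trans (min_le_left _ _) ?_
    have hcX : ((K:ℝ)*Cp)^2*‖x‖^2 ≤ IL := by nlinarith [hKey2, hcase]
    rw [div_le_div_iff₀ (by positivity) sIbpos]
    apply my_le_of_sq_le_sq (by positivity)
    have e1 : Real.sqrt Id * (Real.sqrt 2 * Real.sqrt IL) * (Real.sqrt Id * (Real.sqrt 2 * Real.sqrt IL)) = Id * 2 * IL := by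
      linear_combination (Real.sqrt 2*Real.sqrt IL)^2 * sId + (Id*IL) * s2 + (Id*2) * sIL + (Id * (Real.sqrt 2 * Real.sqrt 2 - 2)) * sIL
    have e2 : ‖x‖ * Real.sqrt Ib * (‖x‖ * Real.sqrt Ib) = ‖x‖^2 * Ib := by
      linear_combination (‖x‖^2) * sIb
    rw [e1, e2]
    nlinarith [mul_le_mul_of_nonneg_left hKey2 (sq_nonneg ‖x‖), mul_le_mul_of_nonneg_right hcX (by linarith : (0:ℝ) ≤ Id - ‖x‖^2), hIL_nonneg, hXle, sq_nonneg ‖x‖]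
end
end
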